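/- arXiv:math/0703908 — 4 statements merged into one kernel-verified Lean document; each statement's English description precedes it below -/
import Mathlib

section
/- The integral from 0 to infinity of (1/y)·((2/√π)·∫_{√y}^∞ e^{-u²} du − e^{-y}) dy equals −2·ln 2. -/
open Real MeasureTheory Set


lemma my_swap {f : ℝ → ℝ → ℝ} {μ ν : Measure ℝ} [SigmaFinite μ] [SigmaFinite ν]
    (hm : AEStronglyMeasurable (Function.uncurry f) (μ.prod ν))
    (h1 : ∀ᵐ x ∂μ, Integrable (f x) ν)
    (h2 : Integrable (fun x => ∫ y, ‖f x y‖ ∂ν) μ) :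
    ∫ x, ∫ y, f x y ∂ν ∂μ = ∫ y, ∫ x, f x y ∂μ ∂ν :=
  MeasureTheory.integral_integral_swap ((MeasureTheory.integrable_prod_iff hm).2 ⟨h1, h2⟩)

lemma integral_exp_neg_mul_Ioi {c a : ℝ} (hc : 0 < c) :
    ∫ y in Ioi a, Real.exp (-(c * y)) = Real.exp (-(c * a)) / c := by
  have := MeasureTheory.integral_comp_mul_left_Ioi (fun x => Real.exp (-x)) a hc
  simpa [smul_eq_mul, integral_exp_neg_Ioi, integral_exp_Iic, div_eq_inv_mul] using this

lemma integrableOn_exp_neg_mul_Ioi {c a : ℝ} (hc : 0 < c) :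
    IntegrableOn (fun y => Real.exp (-(c * y))) (Ioi a) := by
  simpa [neg_mul] using exp_neg_integrableOn_Ioi a hc


lemma frullani_integrableOn {c : ℝ} (hc : 1 ≤ c) :
    IntegrableOn (fun y => (Real.exp (-y) - Real.exp (-(c * y))) / y) (Ioi 0) := by
  have hmeas : AEStronglyMeasurable (fun y => (Real.exp (-y) - Real.exp (-(c * y))) / y)
      (volume.restrict (Ioi (0:ℝ))) := by
    apply Measurable.aestronglyMeasurable
    exact (((Real.measurable_exp.comp measurable_neg).sub
      (Real.measurable_exp.comp (measurable_const.mul measurable_id').neg)).div measurable_id')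
  apply Integrable.mono' (g := fun y => (c - 1) * Real.exp (-y))
  · have h := (exp_neg_integrableOn_Ioi 0 one_pos).const_mul (c-1)
    simpa [neg_one_mul] using h
  · exact hmeas
  · filter_upwards [ae_restrict_mem measurableSet_Ioi] with y hy
    have hy' : (0:ℝ) < y := hy
    have h1 : Real.exp (-(c * y)) ≤ Real.exp (-y) := by
      apply Real.exp_le_exp.2; nlinarith
    have h2 : Real.exp (-y) - Real.exp (-(c * y)) ≤ (c - 1) * y * Real.exp (-y) := by
      have : 1 - Real.exp (-((c - 1) * y)) ≤ (c - 1) * y := by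
        have := Real.add_one_le_exp (-((c - 1) * y))
        nlinarith
      have hrw : Real.exp (-(c * y)) = Real.exp (-y) * Real.exp (-((c-1) * y)) := by
        rw [← Real.exp_add]; ring_nf
      nlinarith [Real.exp_pos (-y)]
    rw [Real.norm_eq_abs, abs_div, abs_of_nonneg (sub_nonneg.2 h1), abs_of_pos hy',
      div_le_iff₀ hy']
    nlinarith


lemma inner_exp_eq {c y : ℝ} (hc : 1 ≤ c) (hy : 0 < y) :
    ∫ t in Ioc 1 c, Real.exp (-(t * y)) = (Real.exp (-y) - Real.exp (-(c * y))) / y := by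
  rw [← intervalIntegral.integral_of_le hc]
  have : ∀ t ∈ uIcc (1:ℝ) c, HasDerivAt (fun t => -Real.exp (-(t * y)) / y)
      (Real.exp (-(t * y))) t := by
    intro t _
    have h : HasDerivAt (fun t : ℝ => -(t * y)) (-y) t := by
      exact (hasDerivAt_mul_const y).neg
    exact ((h.exp.neg).div_const y).congr_deriv (by rw [mul_neg, neg_neg, mul_div_assoc, div_self hy.ne', mul_one])
  rw [intervalIntegral.integral_eq_sub_of_hasDerivAt this]
  · field_simp; ring
  · apply Continuous.intervalIntegrable; continuity


lemma frullani_value {c : ℝ} (hc : 1 ≤ c) :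
    ∫ y in Ioi 0, (Real.exp (-y) - Real.exp (-(c * y))) / y = Real.log c := by
  have key : ∫ y in Ioi 0, (Real.exp (-y) - Real.exp (-(c * y))) / y
      = ∫ y in Ioi (0:ℝ), ∫ t in Ioc (1:ℝ) c, Real.exp (-(t * y)) := by
    apply setIntegral_congr_fun measurableSet_Ioi
    intro y hy
    exact (inner_exp_eq hc hy).symm
  rw [key]
  rw [my_swap (f := fun y t => Real.exp (-(t * y)))]
  · have : ∫ t in Ioc (1:ℝ) c, ∫ y in Ioi (0:ℝ), Real.exp (-(t * y))
        = ∫ t in Ioc (1:ℝ) c, 1 / t := by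
      apply setIntegral_congr_fun measurableSet_Ioc
      intro t ht
      show ∫ y in Ioi (0:ℝ), Real.exp (-(t * y)) = 1 / t
      rw [integral_exp_neg_mul_Ioi (lt_of_lt_of_le one_pos ht.1.le)]
      simp
    rw [this, ← intervalIntegral.integral_of_le hc, integral_one_div, div_one]
    rw [Set.uIcc_of_le hc]
    intro h
    exact absurd (h.1) (by norm_num)
  · apply Continuous.aestronglyMeasurable
    apply Real.continuous_exp.comp
    exact (continuous_snd.mul continuous_fst).neg
  · exact Filter.Eventually.of_forall fun y =>
      (Continuous.integrableOn_Ioc (by continuity))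
  · apply (frullani_integrableOn hc).congr
    filter_upwards [ae_restrict_mem measurableSet_Ioi] with y hy
    rw [← inner_exp_eq hc hy]
    apply setIntegral_congr_fun measurableSet_Ioc
    intro t _
    show Real.exp (-(t * y)) = ‖Real.exp (-(t * y))‖
    rw [Real.norm_eq_abs, abs_of_pos (Real.exp_pos _)]


lemma sqrt_image {y : ℝ} (hy : 0 ≤ y) : Real.sqrt '' Ioi y = Ioi (Real.sqrt y) := by
  ext x
  constructor
  · rintro ⟨t, ht, rfl⟩
    exact Real.sqrt_lt_sqrt hy ht
  · intro hx
    have hx0 : 0 ≤ x := le_trans (Real.sqrt_nonneg y) (le_of_lt hx)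
    exact ⟨x ^ 2, Real.lt_sq_of_sqrt_lt hx, by rw [Real.sqrt_sq hx0]⟩

lemma step1 {y : ℝ} (hy : 0 < y) :
    ∫ u in Ioi (Real.sqrt y), Real.exp (-u ^ 2)
      = ∫ t in Ioi y, Real.exp (-t) / (2 * Real.sqrt t) := by
  rw [← sqrt_image hy.le,
    integral_image_eq_integral_abs_deriv_smul measurableSet_Ioi
      (f' := fun t => 1 / (2 * Real.sqrt t)) ?_ ?_]
  · apply setIntegral_congr_fun measurableSet_Ioi
    intro t ht
    have ht0 : 0 < t := hy.trans ht
    show |1 / (2 * Real.sqrt t)| • Real.exp (-Real.sqrt t ^ 2) = Real.exp (-t) / (2 * Real.sqrt t)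
    rw [smul_eq_mul, Real.sq_sqrt ht0.le, abs_of_pos (by positivity)]
    ring
  · intro t ht
    have ht0 : 0 < t := hy.trans ht
    exact (Real.hasDerivAt_sqrt ht0.ne').hasDerivWithinAt
  · intro a ha b hb hab
    have ha0 : 0 ≤ a := (hy.trans ha).le
    have hb0 : 0 ≤ b := (hy.trans hb).le
    rwa [← Real.sqrt_inj ha0 hb0]


lemma gauss_aux {t : ℝ} (ht : 0 < t) :
    ∫ s in Ioi (0:ℝ), Real.exp (-((1 + s ^ 2) * t))
      = Real.exp (-t) * (Real.sqrt π / (2 * Real.sqrt t)) := by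
  have h : ∀ s : ℝ, Real.exp (-((1 + s ^ 2) * t)) = Real.exp (-t) * Real.exp (-t * s ^ 2) := by
    intro s; rw [← Real.exp_add]; ring_nf
  simp_rw [h]
  rw [MeasureTheory.integral_const_mul, integral_gaussian_Ioi]
  rw [Real.sqrt_div pi_pos.le]
  ring

lemma rep {y : ℝ} (hy : 0 < y) :
    (2 / Real.sqrt π) * (∫ u in Ioi (Real.sqrt y), Real.exp (-u ^ 2))
      = ∫ s in Ioi (0:ℝ), (2 / π) * Real.exp (-((1 + s ^ 2) * y)) / (1 + s ^ 2) := by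
  rw [step1 hy]
  have key : ∫ t in Ioi y, Real.exp (-t) / (2 * Real.sqrt t)
      = ∫ t in Ioi y, ∫ s in Ioi (0:ℝ), (1 / Real.sqrt π) * Real.exp (-((1 + s ^ 2) * t)) := by
    apply setIntegral_congr_fun measurableSet_Ioi
    intro t ht
    have ht0 : 0 < t := hy.trans ht
    show Real.exp (-t) / (2 * Real.sqrt t)
      = ∫ s in Ioi (0:ℝ), (1 / Real.sqrt π) * Real.exp (-((1 + s ^ 2) * t))
    rw [MeasureTheory.integral_const_mul, gauss_aux ht0]
    have hπ : Real.sqrt π ≠ 0 := by positivity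
    have hst : Real.sqrt t ≠ 0 := by positivity
    field_simp
  rw [key, my_swap (f := fun t s => (1 / Real.sqrt π) * Real.exp (-((1 + s ^ 2) * t)))]
  · have : ∫ s in Ioi (0:ℝ), ∫ t in Ioi y, (1 / Real.sqrt π) * Real.exp (-((1 + s ^ 2) * t))
        = ∫ s in Ioi (0:ℝ), (1 / Real.sqrt π) * (Real.exp (-((1 + s ^ 2) * y)) / (1 + s ^ 2)) := by
      apply setIntegral_congr_fun measurableSet_Ioi
      intro s _
      have hc : (0:ℝ) < 1 + s ^ 2 := by positivity
      show ∫ t in Ioi y, (1 / Real.sqrt π) * Real.exp (-((1 + s ^ 2) * t))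
          = (1 / Real.sqrt π) * (Real.exp (-((1 + s ^ 2) * y)) / (1 + s ^ 2))
      rw [MeasureTheory.integral_const_mul, integral_exp_neg_mul_Ioi hc]
    rw [this, MeasureTheory.integral_const_mul]
    simp_rw [mul_div_assoc]
    rw [MeasureTheory.integral_const_mul, ← mul_assoc]
    congr 1
    rw [div_mul_div_comm, Real.mul_self_sqrt pi_pos.le, mul_one]
  · apply Continuous.aestronglyMeasurable
    apply continuous_const.mul
    apply Real.continuous_exp.comp
    exact ((continuous_const.add (continuous_snd.pow 2)).mul continuous_fst).neg
  · filter_upwards [ae_restrict_mem measurableSet_Ioi] with t ht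
    have ht0 : 0 < t := hy.trans ht
    apply Integrable.const_mul
    have hint : Integrable (fun s : ℝ => Real.exp (-t) * Real.exp (-t * s ^ 2))
        (volume.restrict (Ioi 0)) :=
      ((integrable_exp_neg_mul_sq ht0).restrict).const_mul _
    apply hint.congr
    filter_upwards with s
    rw [← Real.exp_add]; ring_nf
  · have hint : Integrable (fun t : ℝ => Real.exp (-t) * (Real.sqrt π / (2 * Real.sqrt y)))
        (volume.restrict (Ioi y)) := by
      have h := (exp_neg_integrableOn_Ioi y one_pos).mul_const (Real.sqrt π / (2 * Real.sqrt y))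
      simpa [neg_one_mul] using h
    apply Integrable.mono' hint
    · have hm : AEStronglyMeasurable
          (Function.uncurry fun t s : ℝ => (1 / Real.sqrt π) * Real.exp (-((1 + s ^ 2) * t)))
          ((volume.restrict (Ioi y)).prod (volume.restrict (Ioi (0:ℝ)))) := by
        apply Continuous.aestronglyMeasurable
        apply continuous_const.mul
        apply Real.continuous_exp.comp
        exact ((continuous_const.add (continuous_snd.pow 2)).mul continuous_fst).neg
      exact hm.norm.integral_prod_right'
    · filter_upwards [ae_restrict_mem measurableSet_Ioi] with t ht
      have ht0 : 0 < t := hy.trans ht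
      have : ∫ s in Ioi (0:ℝ), ‖(1 / Real.sqrt π) * Real.exp (-((1 + s ^ 2) * t))‖
          = (1 / Real.sqrt π) * (Real.exp (-t) * (Real.sqrt π / (2 * Real.sqrt t))) := by
        rw [← gauss_aux ht0, ← MeasureTheory.integral_const_mul]
        apply setIntegral_congr_fun measurableSet_Ioi
        intro s _
        show ‖(1 / Real.sqrt π) * Real.exp (-((1 + s ^ 2) * t))‖
          = (1 / Real.sqrt π) * Real.exp (-((1 + s ^ 2) * t))
        rw [Real.norm_eq_abs, abs_of_pos (by positivity)]
      rw [Real.norm_eq_abs, abs_of_nonneg (integral_nonneg fun s => norm_nonneg _), this]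
      have h1 : Real.sqrt y ≤ Real.sqrt t := Real.sqrt_le_sqrt ht.le
      have h2 : (0:ℝ) < Real.sqrt y := Real.sqrt_pos.2 hy
      have h3 : (1:ℝ) ≤ Real.sqrt π := by
        rw [show (1:ℝ) = Real.sqrt 1 by simp]
        exact Real.sqrt_le_sqrt (by linarith [Real.pi_gt_three])
      have hL : (1 / Real.sqrt π) * (Real.exp (-t) * (Real.sqrt π / (2 * Real.sqrt t)))
          = Real.exp (-t) / (2 * Real.sqrt t) := by
        have hπ : Real.sqrt π ≠ 0 := by positivity
        field_simp
      rw [hL]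
      calc Real.exp (-t) / (2 * Real.sqrt t) ≤ Real.exp (-t) / (2 * Real.sqrt y) := by
            gcongr
        _ ≤ Real.exp (-t) * (Real.sqrt π / (2 * Real.sqrt y)) := by
            rw [div_eq_mul_one_div (Real.exp (-t))]
            gcongr



lemma log_le_rpow_aux {x : ℝ} (hx : 1 ≤ x) : Real.log x ≤ 4 * x ^ ((1:ℝ)/4) := by
  have h0 : (0:ℝ) < x := lt_of_lt_of_le one_pos hx
  have h1 : Real.log x = 4 * Real.log (x ^ ((1:ℝ)/4)) := by
    rw [Real.log_rpow h0]; ring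
  rw [h1]
  have h2 : Real.log (x ^ ((1:ℝ)/4)) ≤ x ^ ((1:ℝ)/4) := by
    have := Real.log_le_sub_one_of_pos (x := x ^ ((1:ℝ)/4)) (by positivity)
    linarith
  linarith

lemma L4int : IntegrableOn (fun s : ℝ => Real.log (1 + s ^ 2) / (1 + s ^ 2)) (Ioi 0) := by
  have hmeas : Measurable (fun s : ℝ => Real.log (1 + s ^ 2) / (1 + s ^ 2)) := by
    exact (Real.measurable_log.comp (measurable_const.add (measurable_id'.pow_const 2))).div
      (measurable_const.add (measurable_id'.pow_const 2))
  have h01 : IntegrableOn (fun s : ℝ => Real.log (1 + s ^ 2) / (1 + s ^ 2)) (Ioc 0 1) := by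
    apply Integrable.mono' (g := fun _ : ℝ => Real.log 2)
    · exact integrableOn_const measure_Ioc_lt_top.ne
    · exact hmeas.aestronglyMeasurable
    · filter_upwards [ae_restrict_mem measurableSet_Ioc] with s hs
      have h1 : (1:ℝ) ≤ 1 + s ^ 2 := by nlinarith [hs.1]
      have h2 : 1 + s ^ 2 ≤ 2 := by nlinarith [hs.1, hs.2]
      have hlog : 0 ≤ Real.log (1 + s ^ 2) := Real.log_nonneg h1
      rw [Real.norm_eq_abs, abs_of_nonneg (by positivity)]
      calc Real.log (1 + s ^ 2) / (1 + s ^ 2) ≤ Real.log (1 + s ^ 2) := by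
            rw [div_le_iff₀ (by positivity)]; nlinarith
        _ ≤ Real.log 2 := Real.log_le_log (by linarith) h2
  have h1i : IntegrableOn (fun s : ℝ => Real.log (1 + s ^ 2) / (1 + s ^ 2)) (Ioi 1) := by
    apply Integrable.mono' (g := fun s : ℝ => 4 * s ^ (-(3:ℝ)/2))
    · exact (integrableOn_Ioi_rpow_of_lt (by norm_num) one_pos).const_mul 4
    · exact hmeas.aestronglyMeasurable
    · filter_upwards [ae_restrict_mem measurableSet_Ioi] with s hs
      have hs0 : (0:ℝ) < s := lt_trans one_pos hs
      have h1 : (1:ℝ) ≤ 1 + s ^ 2 := by nlinarith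
      have hlog : 0 ≤ Real.log (1 + s ^ 2) := Real.log_nonneg h1
      rw [Real.norm_eq_abs, abs_of_nonneg (div_nonneg hlog (by positivity))]
      have ha := log_le_rpow_aux h1
      calc Real.log (1 + s ^ 2) / (1 + s ^ 2)
          ≤ 4 * (1 + s ^ 2) ^ ((1:ℝ)/4) / (1 + s ^ 2) := by gcongr
        _ = 4 * (1 + s ^ 2) ^ ((1:ℝ)/4 - 1) := by
            rw [mul_div_assoc, Real.rpow_sub (by positivity), Real.rpow_one]
        _ ≤ 4 * (s ^ 2 : ℝ) ^ ((1:ℝ)/4 - 1) := by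
            have := Real.rpow_le_rpow_of_nonpos (x := (s^2:ℝ)) (y := 1 + s^2)
              (by positivity) (by linarith) (by norm_num : ((1:ℝ)/4 - 1) ≤ 0)
            linarith
        _ = 4 * s ^ (-(3:ℝ)/2) := by
            rw [← Real.rpow_natCast s 2, ← Real.rpow_mul hs0.le]
            norm_num
  have := h01.union h1i
  rwa [Ioc_union_Ioi_eq_Ioi (by norm_num : (0:ℝ) ≤ 1)] at this


lemma j1 (s : ℝ) :
    ∫ a in Ioc (0:ℝ) 1, s ^ 2 / (1 + a * s ^ 2) = Real.log (1 + s ^ 2) := by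
  rw [← intervalIntegral.integral_of_le zero_le_one]
  have hderiv : ∀ a ∈ uIcc (0:ℝ) 1, HasDerivAt (fun a => Real.log (1 + a * s ^ 2))
      (s ^ 2 / (1 + a * s ^ 2)) a := by
    intro a ha
    rw [Set.uIcc_of_le zero_le_one] at ha
    have hpos : 0 < 1 + a * s ^ 2 := by nlinarith [ha.1, sq_nonneg s]
    have h : HasDerivAt (fun a : ℝ => 1 + a * s ^ 2) (s ^ 2) a := by
      simpa using (hasDerivAt_id a).mul_const (s ^ 2) |>.const_add 1
    simpa using h.log hpos.ne'
  rw [intervalIntegral.integral_eq_sub_of_hasDerivAt hderiv]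
  · norm_num
  · apply ContinuousOn.intervalIntegrable
    apply ContinuousOn.div continuousOn_const
    · fun_prop
    · intro a ha
      rw [Set.uIcc_of_le zero_le_one] at ha
      nlinarith [ha.1, sq_nonneg s]

lemma j3aux {a : ℝ} (ha : 0 < a) :
    IntegrableOn (fun s : ℝ => (1 + a * s ^ 2)⁻¹) (Ioi 0)
    ∧ ∫ s in Ioi (0:ℝ), (1 + a * s ^ 2)⁻¹ = π / (2 * Real.sqrt a) := by
  have hsa : 0 < Real.sqrt a := Real.sqrt_pos.2 ha
  have hrw : ∀ s : ℝ, (1 + a * s ^ 2)⁻¹ = (1 + (Real.sqrt a * s) ^ 2)⁻¹ := by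
    intro s; rw [mul_pow, Real.sq_sqrt ha.le]
  constructor
  · simp_rw [hrw]
    exact (integrable_inv_one_add_sq.comp_mul_left' hsa.ne').integrableOn
  · simp_rw [hrw]
    have h := MeasureTheory.integral_comp_mul_left_Ioi
      (fun x : ℝ => (1 + x ^ 2)⁻¹) 0 hsa
    rw [mul_zero] at h
    rw [h, integral_Ioi_inv_one_add_sq, Real.arctan_zero, smul_eq_mul]
    field_simp
    ring

lemma j3 {a : ℝ} (ha : a ∈ Ioo (0:ℝ) 1) :
    ∫ s in Ioi (0:ℝ), s ^ 2 / ((1 + a * s ^ 2) * (1 + s ^ 2))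
      = π / 2 * (1 / (Real.sqrt a * (1 + Real.sqrt a))) := by
  have ha0 := ha.1
  have ha1 := ha.2
  have hb : 0 < Real.sqrt a := Real.sqrt_pos.2 ha0
  have hb1 : Real.sqrt a < 1 := by
    rw [show (1:ℝ) = Real.sqrt 1 by simp]
    exact Real.sqrt_lt_sqrt ha0.le ha1
  have key : ∀ s : ℝ, s ^ 2 / ((1 + a * s ^ 2) * (1 + s ^ 2))
      = (1 / (1 - a)) * ((1 + a * s ^ 2)⁻¹ - (1 + s ^ 2)⁻¹) := by
    intro s
    have h1 : (0:ℝ) < 1 + a * s ^ 2 := by nlinarith [sq_nonneg s]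
    have h2 : (0:ℝ) < 1 + s ^ 2 := by positivity
    have h3 : (1:ℝ) - a ≠ 0 := by linarith
    field_simp
    ring
  simp_rw [key]
  rw [MeasureTheory.integral_const_mul,
    integral_sub (j3aux ha0).1 integrable_inv_one_add_sq.integrableOn,
    (j3aux ha0).2, integral_Ioi_inv_one_add_sq, Real.arctan_zero, sub_zero]
  obtain ⟨b, hb0, hb1', rfl⟩ : ∃ b : ℝ, 0 < b ∧ b < 1 ∧ b ^ 2 = a :=
    ⟨Real.sqrt a, hb, hb1, Real.sq_sqrt ha0.le⟩
  rw [Real.sqrt_sq hb0.le]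
  have h1 : (1:ℝ) - b ^ 2 ≠ 0 := by nlinarith
  have h2 : (1:ℝ) + b ≠ 0 := by nlinarith
  field_simp
  ring

lemma sq_image_Ioc : (fun b : ℝ => b ^ 2) '' Ioc 0 1 = Ioc (0:ℝ) 1 := by
  ext x
  constructor
  · rintro ⟨b, hb, rfl⟩
    simp only [mem_Ioc] at *
    exact ⟨by nlinarith [hb.1], by nlinarith [hb.1, hb.2]⟩
  · intro hx
    refine ⟨Real.sqrt x, ⟨Real.sqrt_pos.2 hx.1, ?_⟩, Real.sq_sqrt hx.1.le⟩
    rw [show (1:ℝ) = Real.sqrt 1 by simp]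
    exact Real.sqrt_le_sqrt hx.2

lemma j4 : ∫ a in Ioc (0:ℝ) 1, π / 2 * (1 / (Real.sqrt a * (1 + Real.sqrt a)))
    = π * Real.log 2 := by
  rw [← sq_image_Ioc, integral_image_eq_integral_abs_deriv_smul measurableSet_Ioc
    (f' := fun b => 2 * b) (fun b _ => by simpa using (hasDerivAt_pow 2 b).hasDerivWithinAt)
    (fun b1 h1 b2 h2 he => by
      have he' : b1 ^ 2 = b2 ^ 2 := he
      rw [← Real.sqrt_sq h1.1.le, ← Real.sqrt_sq h2.1.le, he'])]
  have : ∀ b ∈ Ioc (0:ℝ) 1, |2 * b| • (π / 2 * (1 / (Real.sqrt (b ^ 2) * (1 + Real.sqrt (b ^ 2)))))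
      = π * (1 + b)⁻¹ := by
    intro b hb
    rw [Real.sqrt_sq hb.1.le, smul_eq_mul, abs_of_pos (by linarith [hb.1])]
    have h1 : (1:ℝ) + b ≠ 0 := by nlinarith [hb.1]
    have h0 : b ≠ 0 := ne_of_gt hb.1
    field_simp
  rw [setIntegral_congr_fun measurableSet_Ioc this,
    ← intervalIntegral.integral_of_le zero_le_one,
    intervalIntegral.integral_const_mul]
  have hcomp := intervalIntegral.integral_comp_add_left (a := (0:ℝ)) (b := 1)
    (f := fun t : ℝ => t⁻¹) 1
  rw [hcomp]
  norm_num


lemma Gmeas : Measurable (fun p : ℝ × ℝ => p.1 ^ 2 / ((1 + p.2 * p.1 ^ 2) * (1 + p.1 ^ 2))) := by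
  apply Measurable.div
  · exact (measurable_fst.pow_const 2)
  · exact ((measurable_const.add (measurable_snd.mul (measurable_fst.pow_const 2))).mul
      (measurable_const.add (measurable_fst.pow_const 2)))

lemma inner_a_eq (s : ℝ) :
    ∫ a in Ioc (0:ℝ) 1, s ^ 2 / ((1 + a * s ^ 2) * (1 + s ^ 2))
      = Real.log (1 + s ^ 2) / (1 + s ^ 2) := by
  have : ∀ a : ℝ, s ^ 2 / ((1 + a * s ^ 2) * (1 + s ^ 2))
      = s ^ 2 / (1 + a * s ^ 2) * ((1 + s ^ 2)⁻¹) := by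
    intro a; rw [div_mul_eq_div_div, div_eq_mul_inv]
  simp_rw [this]
  rw [MeasureTheory.integral_mul_const, j1, div_eq_mul_inv]

lemma Jval : ∫ s in Ioi (0:ℝ), Real.log (1 + s ^ 2) / (1 + s ^ 2) = π * Real.log 2 := by
  have key : ∫ s in Ioi (0:ℝ), Real.log (1 + s ^ 2) / (1 + s ^ 2)
      = ∫ s in Ioi (0:ℝ), ∫ a in Ioc (0:ℝ) 1, s ^ 2 / ((1 + a * s ^ 2) * (1 + s ^ 2)) := by
    apply setIntegral_congr_fun measurableSet_Ioi
    intro s _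
    exact (inner_a_eq s).symm
  rw [key, my_swap (f := fun s a => s ^ 2 / ((1 + a * s ^ 2) * (1 + s ^ 2)))]
  · rw [← j4]
    apply setIntegral_congr_ae measurableSet_Ioc
    have hne : ∀ᵐ a : ℝ, a ≠ (1:ℝ) := by
      rw [Filter.eventually_iff, mem_ae_iff]
      simp [show {a : ℝ | ¬ a ≠ 1}ᶜᶜ = {(1:ℝ)} by ext; simp]
    filter_upwards [hne] with a hane ha
    exact j3 ⟨ha.1, lt_of_le_of_ne ha.2 hane⟩
  · exact Gmeas.aestronglyMeasurable
  · filter_upwards with s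
    apply Integrable.mono' (g := fun _ : ℝ => (1:ℝ))
    · exact integrableOn_const measure_Ioc_lt_top.ne
    · exact (Gmeas.comp (measurable_prodMk_left (x := s))).aestronglyMeasurable
    · filter_upwards [ae_restrict_mem measurableSet_Ioc] with a ha
      have h1 : (1:ℝ) ≤ 1 + a * s ^ 2 := by nlinarith [ha.1, sq_nonneg s]
      have h2 : (0:ℝ) < 1 + s ^ 2 := by positivity
      rw [Real.norm_eq_abs, abs_of_nonneg (by positivity)]
      rw [div_le_one (by nlinarith)]
      nlinarith
  · apply L4int.congr
    filter_upwards [ae_restrict_mem measurableSet_Ioi] with s _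
    rw [← inner_a_eq s]
    apply setIntegral_congr_fun measurableSet_Ioc
    intro a ha
    have h1 : (1:ℝ) ≤ 1 + a * s ^ 2 := by nlinarith [ha.1, sq_nonneg s]
    have h2 : (0:ℝ) < 1 + s ^ 2 := by positivity
    show s ^ 2 / ((1 + a * s ^ 2) * (1 + s ^ 2)) = ‖s ^ 2 / ((1 + a * s ^ 2) * (1 + s ^ 2))‖
    rw [Real.norm_eq_abs, abs_of_nonneg (by positivity)]


noncomputable def P (y s : ℝ) : ℝ :=
  2 / π / (1 + s ^ 2) * ((Real.exp (-((1 + s ^ 2) * y)) - Real.exp (-y)) / y)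

lemma hB (y : ℝ) : ∫ s in Ioi (0:ℝ), 2 / π * Real.exp (-y) / (1 + s ^ 2) = Real.exp (-y) := by
  simp_rw [div_eq_mul_inv (2 / π * Real.exp (-y))]
  rw [MeasureTheory.integral_const_mul, integral_Ioi_inv_one_add_sq, Real.arctan_zero, sub_zero]
  field_simp

lemma claimAB {y : ℝ} (hy : 0 < y) :
    (1 / y) * ((2 / Real.sqrt π) * (∫ u in Ioi (Real.sqrt y), Real.exp (-u ^ 2))
      - Real.exp (-y)) = ∫ s in Ioi (0:ℝ), P y s := by
  have hf : IntegrableOn (fun s : ℝ => 2 / π * Real.exp (-((1 + s ^ 2) * y)) / (1 + s ^ 2))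
      (Ioi 0) := by
    apply Integrable.mono' (g := fun s : ℝ => (2 / π) * (1 + s ^ 2)⁻¹)
    · exact integrable_inv_one_add_sq.integrableOn.const_mul _
    · apply Measurable.aestronglyMeasurable
      exact ((measurable_const.mul (Real.measurable_exp.comp
        ((measurable_const.add (measurable_id'.pow_const 2)).mul measurable_const).neg)).div
        (measurable_const.add (measurable_id'.pow_const 2)))
    · filter_upwards with s
      have h2 : (0:ℝ) < 1 + s ^ 2 := by positivity
      have he : Real.exp (-((1 + s ^ 2) * y)) ≤ 1 := by
        apply Real.exp_le_one_iff.2; nlinarith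
      rw [Real.norm_eq_abs, abs_of_nonneg (by positivity), div_le_iff₀ h2, mul_assoc,
        inv_mul_cancel₀ h2.ne', mul_one]
      have hpi : (0:ℝ) < 2 / π := by positivity
      nlinarith [Real.exp_pos (-((1 + s ^ 2) * y))]
  have hg : IntegrableOn (fun s : ℝ => 2 / π * Real.exp (-y) / (1 + s ^ 2)) (Ioi 0) := by
    simp_rw [div_eq_mul_inv (2 / π * Real.exp (-y))]
    exact integrable_inv_one_add_sq.integrableOn.const_mul _
  rw [rep hy]
  nth_rewrite 1 [← hB y]
  rw [← integral_sub hf hg, ← MeasureTheory.integral_const_mul]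
  apply setIntegral_congr_fun measurableSet_Ioi
  intro s _
  have h2 : (0:ℝ) < 1 + s ^ 2 := by positivity
  show 1 / y * (2 / π * Real.exp (-((1 + s ^ 2) * y)) / (1 + s ^ 2)
      - 2 / π * Real.exp (-y) / (1 + s ^ 2)) = P y s
  unfold P
  field_simp

lemma hc_of (s : ℝ) : (1:ℝ) ≤ 1 + s ^ 2 := by nlinarith [sq_nonneg s]

lemma hPsec (s : ℝ) : Integrable (fun y => P y s) (volume.restrict (Ioi 0)) := by
  have h := ((frullani_integrableOn (hc_of s)).neg.const_mul (2 / π / (1 + s ^ 2)))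
  apply h.congr
  filter_upwards with y
  simp only [Pi.neg_apply]
  unfold P
  ring

lemma hPval (s : ℝ) : ∫ y in Ioi (0:ℝ), P y s
    = 2 / π / (1 + s ^ 2) * (- Real.log (1 + s ^ 2)) := by
  unfold P
  rw [MeasureTheory.integral_const_mul]
  congr 1
  have : ∀ y : ℝ, (Real.exp (-((1 + s ^ 2) * y)) - Real.exp (-y)) / y
      = -((Real.exp (-y) - Real.exp (-((1 + s ^ 2) * y))) / y) := by
    intro y; ring
  simp_rw [this]
  rw [integral_neg, frullani_value (hc_of s)]

lemma hPnorm (s : ℝ) : ∫ y in Ioi (0:ℝ), ‖P y s‖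
    = 2 / π * (Real.log (1 + s ^ 2) / (1 + s ^ 2)) := by
  have h2 : (0:ℝ) < 1 + s ^ 2 := by positivity
  have key : ∫ y in Ioi (0:ℝ), ‖P y s‖
      = ∫ y in Ioi (0:ℝ), 2 / π / (1 + s ^ 2) * ((Real.exp (-y) - Real.exp (-((1 + s ^ 2) * y))) / y) := by
    apply setIntegral_congr_fun measurableSet_Ioi
    intro y hy
    have hy0 : (0:ℝ) < y := hy
    have hle : Real.exp (-((1 + s ^ 2) * y)) ≤ Real.exp (-y) := by
      apply Real.exp_le_exp.2; nlinarith
    show ‖P y s‖ = 2 / π / (1 + s ^ 2) * ((Real.exp (-y) - Real.exp (-((1 + s ^ 2) * y))) / y)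
    unfold P
    rw [Real.norm_eq_abs, abs_mul, abs_of_nonneg (by positivity), abs_div,
      abs_of_pos hy0, abs_of_nonpos (by linarith : Real.exp (-((1 + s ^ 2) * y)) - Real.exp (-y) ≤ 0)]
    ring
  rw [key, MeasureTheory.integral_const_mul, frullani_value (hc_of s)]
  field_simp

lemma Pmeas : Measurable (Function.uncurry P) := by
  unfold P Function.uncurry
  apply Measurable.mul
  · exact (measurable_const.div (measurable_const.add (measurable_snd.pow_const 2)))
  · exact ((Real.measurable_exp.comp
      (((measurable_const.add (measurable_snd.pow_const 2)).mul measurable_fst).neg)).sub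
      (Real.measurable_exp.comp measurable_fst.neg)).div measurable_fst

lemma hProd : Integrable (Function.uncurry P)
    ((volume.restrict (Ioi (0:ℝ))).prod (volume.restrict (Ioi (0:ℝ)))) := by
  rw [MeasureTheory.integrable_prod_iff' Pmeas.aestronglyMeasurable]
  constructor
  · filter_upwards with s
    exact hPsec s
  · have h := (L4int.const_mul (2 / π))
    apply h.congr
    filter_upwards with s
    exact (hPnorm s).symm

/-- The integral from 0 to infinity of
`(1/y)·((2/√π)·∫_{√y}^∞ e^{-u²} du − e^{-y})` equals `−2·ln 2`. -/
theorem integral_g_eq_neg_two_log_two :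
    ∫ y in Ioi (0:ℝ),
      (1 / y) * ((2 / Real.sqrt π) * (∫ u in Ioi (Real.sqrt y), Real.exp (-u ^ 2))
        - Real.exp (-y)) = -2 * Real.log 2 := by
  have step : ∫ y in Ioi (0:ℝ),
      (1 / y) * ((2 / Real.sqrt π) * (∫ u in Ioi (Real.sqrt y), Real.exp (-u ^ 2))
        - Real.exp (-y)) = ∫ y in Ioi (0:ℝ), ∫ s in Ioi (0:ℝ), P y s := by
    apply setIntegral_congr_fun measurableSet_Ioi
    intro y hy
    exact claimAB hy
  rw [step, MeasureTheory.integral_integral_swap hProd]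
  have step2 : ∫ s in Ioi (0:ℝ), ∫ y in Ioi (0:ℝ), P y s
      = ∫ s in Ioi (0:ℝ), (-(2 / π)) * (Real.log (1 + s ^ 2) / (1 + s ^ 2)) := by
    apply setIntegral_congr_fun measurableSet_Ioi
    intro s _
    have h2 : (0:ℝ) < 1 + s ^ 2 := by positivity
    show ∫ y in Ioi (0:ℝ), P y s = -(2 / π) * (Real.log (1 + s ^ 2) / (1 + s ^ 2))
    rw [hPval s]
    show 2 / π / (1 + s ^ 2) * (-Real.log (1 + s ^ 2))
        = -(2 / π) * (Real.log (1 + s ^ 2) / (1 + s ^ 2))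
    field_simp
  rw [step2, MeasureTheory.integral_const_mul, Jval]
  field_simp
end

section
/- The limit as ε ↓ 0 of (G(ε) − 1/(2ε²)) equals −1/4, where G(ε) = ∑_{n=1}^∞ (1/√(2π))·∫_{ε√n}^∞ e^{-x²/2} dx. -/
open Real MeasureTheory Set Filter Topology

noncomputable def gg (ε t : ℝ) : ℝ :=
  ε / (2 * Real.sqrt (2 * π)) * (t ^ (-(1/2) : ℝ) * Real.exp (-(ε ^ 2 / 2) * t))

lemma gg_nonneg {ε t : ℝ} (hε : 0 < ε) (ht : 0 < t) : 0 ≤ gg ε t := by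
  unfold gg
  have h1 : (0:ℝ) < t ^ (-(1/2) : ℝ) := Real.rpow_pos_of_pos ht _
  positivity

lemma gg_anti {ε a b : ℝ} (hε : 0 < ε) (ha : 0 < a) (hab : a ≤ b) : gg ε b ≤ gg ε a := by
  unfold gg
  have hb : 0 < b := lt_of_lt_of_le ha hab
  have h1 : b ^ (-(1/2) : ℝ) ≤ a ^ (-(1/2) : ℝ) :=
    Real.rpow_le_rpow_of_nonpos ha hab (by norm_num)
  have h2 : Real.exp (-(ε ^ 2 / 2) * b) ≤ Real.exp (-(ε ^ 2 / 2) * a) := by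
    apply Real.exp_le_exp.mpr
    nlinarith [sq_nonneg ε]
  have h3 : (0:ℝ) ≤ ε / (2 * Real.sqrt (2 * π)) := by positivity
  apply mul_le_mul_of_nonneg_left _ h3
  apply mul_le_mul h1 h2 (Real.exp_pos _).le (Real.rpow_pos_of_pos ha _).le

lemma gg_le {ε t : ℝ} (hε : 0 < ε) (ht : 0 < t) :
    gg ε t ≤ ε / (2 * Real.sqrt (2 * π)) * t ^ (-(1/2) : ℝ) := by
  unfold gg
  have h2 : Real.exp (-(ε ^ 2 / 2) * t) ≤ 1 := by
    apply Real.exp_le_one_iff.mpr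
    nlinarith [sq_nonneg ε]
  have h1 : (0:ℝ) ≤ t ^ (-(1/2) : ℝ) := (Real.rpow_pos_of_pos ht _).le
  have h3 : (0:ℝ) ≤ ε / (2 * Real.sqrt (2 * π)) := by positivity
  calc ε / (2 * Real.sqrt (2 * π)) * (t ^ (-(1/2) : ℝ) * Real.exp (-(ε ^ 2 / 2) * t))
      ≤ ε / (2 * Real.sqrt (2 * π)) * (t ^ (-(1/2) : ℝ) * 1) := by
        apply mul_le_mul_of_nonneg_left _ h3
        exact mul_le_mul_of_nonneg_left h2 h1
    _ = ε / (2 * Real.sqrt (2 * π)) * t ^ (-(1/2) : ℝ) := by ring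

lemma cov {ε b : ℝ} (hε : 0 < ε) (hb : 0 ≤ b) :
    ∫ t in Ioi b, gg ε t
      = (1 / Real.sqrt (2 * π)) * ∫ x in Ioi (ε * Real.sqrt b), Real.exp (-x ^ 2 / 2) := by
  have himg : (fun t : ℝ => ε * Real.sqrt t) '' (Ioi b) = Ioi (ε * Real.sqrt b) := by
    ext y
    constructor
    · rintro ⟨t, ht, rfl⟩
      exact mul_lt_mul_of_pos_left (Real.sqrt_lt_sqrt hb ht) hε
    · intro hy
      have hy0 : 0 ≤ y := le_trans (by positivity) (le_of_lt hy)
      refine ⟨(y / ε) ^ 2, ?_, ?_⟩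
      · have h1 : Real.sqrt b < y / ε := by
          rw [lt_div_iff₀ hε]
          have := mem_Ioi.mp hy
          linarith [mul_comm (Real.sqrt b) ε]
        have h2 : b = Real.sqrt b ^ 2 := (Real.sq_sqrt hb).symm
        rw [mem_Ioi, h2]
        apply pow_lt_pow_left₀ h1 (Real.sqrt_nonneg b) (by norm_num)
      · show ε * Real.sqrt ((y / ε) ^ 2) = y
        rw [Real.sqrt_sq (by positivity)]
        field_simp
  have hder : ∀ t ∈ Ioi b, HasDerivWithinAt (fun t : ℝ => ε * Real.sqrt t)
      (ε * (1 / (2 * Real.sqrt t))) (Ioi b) t := by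
    intro t ht
    have ht0 : t ≠ 0 := by
      have : 0 < t := lt_of_le_of_lt hb ht
      exact ne_of_gt this
    exact ((Real.hasDerivAt_sqrt ht0).const_mul ε).hasDerivWithinAt
  have hinj : InjOn (fun t : ℝ => ε * Real.sqrt t) (Ioi b) := by
    intro s hs t ht h
    have hs0 : 0 ≤ s := le_trans hb (le_of_lt hs)
    have ht0 : 0 ≤ t := le_trans hb (le_of_lt ht)
    have : Real.sqrt s = Real.sqrt t := mul_left_cancel₀ (ne_of_gt hε) h
    calc s = Real.sqrt s ^ 2 := (Real.sq_sqrt hs0).symm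
      _ = Real.sqrt t ^ 2 := by rw [this]
      _ = t := Real.sq_sqrt ht0
  rw [← MeasureTheory.integral_const_mul (1 / Real.sqrt (2 * π)) _, ← himg,
    integral_image_eq_integral_abs_deriv_smul measurableSet_Ioi hder hinj]
  apply setIntegral_congr_fun measurableSet_Ioi
  intro t ht
  have ht0 : 0 < t := lt_of_le_of_lt hb ht
  have hst : 0 < Real.sqrt t := Real.sqrt_pos.mpr ht0
  have hsq : (ε * Real.sqrt t) ^ 2 = ε ^ 2 * t := by
    rw [mul_pow, Real.sq_sqrt ht0.le]
  have habs : |ε * (1 / (2 * Real.sqrt t))| = ε * (1 / (2 * Real.sqrt t)) := by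
    apply abs_of_nonneg; positivity
  have hrpow : t ^ (-(1/2) : ℝ) = (Real.sqrt t)⁻¹ := by
    rw [Real.rpow_neg ht0.le, Real.sqrt_eq_rpow]
  simp only [smul_eq_mul, habs, hsq]
  unfold gg
  rw [hrpow]
  have hpi : Real.sqrt (2 * π) ≠ 0 := by positivity
  have hexp : -(ε ^ 2 * t) / 2 = -(ε ^ 2 / 2) * t := by ring
  rw [hexp]
  field_simp

lemma int_rpow_exp {ε : ℝ} (hε : 0 < ε) {a : ℝ} (ha : 0 < a) :
    ∫ t in Ioi (0:ℝ), t ^ (a - 1) * Real.exp (-(ε ^ 2 / 2) * t)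
      = (2 / ε ^ 2) ^ a * Real.Gamma a := by
  have hr : (0:ℝ) < ε ^ 2 / 2 := by positivity
  have := integral_rpow_mul_exp_neg_mul_Ioi ha hr
  simp only [neg_mul] at this ⊢
  rw [this]
  congr 1
  rw [one_div]
  congr 1
  field_simp

lemma sqrt_two_div_sq {ε : ℝ} (hε : 0 < ε) :
    ((2 / ε ^ 2) ^ ((1:ℝ)/2) : ℝ) = Real.sqrt 2 / ε := by
  rw [← Real.sqrt_eq_rpow, Real.sqrt_div' 2 (by positivity), Real.sqrt_sq hε.le]

lemma base_integrable {ε : ℝ} (hε : 0 < ε) {s : ℝ} (hs : -1 < s) :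
    IntegrableOn (fun t : ℝ => t ^ s * Real.exp (-(ε ^ 2 / 2) * t)) (Ioi 0) := by
  have h := integrableOn_rpow_mul_exp_neg_mul_rpow hs one_pos (show (0:ℝ) < ε ^ 2 / 2 by positivity)
  simpa [Real.rpow_one] using h

lemma gg_integrableOn {ε : ℝ} (hε : 0 < ε) : IntegrableOn (gg ε) (Ioi 0) := by
  exact (base_integrable hε (by norm_num : (-1:ℝ) < -(1/2))).const_mul _

lemma t_gg_integrableOn {ε : ℝ} (hε : 0 < ε) :
    IntegrableOn (fun t => t * gg ε t) (Ioi 0) := by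
  have h := ((base_integrable hε (by norm_num : (-1:ℝ) < 1/2)).const_mul
    (ε / (2 * Real.sqrt (2 * π))))
  refine MeasureTheory.IntegrableOn.congr_fun h ?_ measurableSet_Ioi
  intro t ht
  have ht0 : (0:ℝ) < t := ht
  show ε / (2 * Real.sqrt (2 * π)) * (t ^ ((1:ℝ)/2) * Real.exp (-(ε ^ 2 / 2) * t)) = t * gg ε t
  unfold gg
  have : t ^ ((1:ℝ)/2) = t * t ^ (-(1/2):ℝ) := by
    rw [← Real.rpow_one_add' ht0.le (by norm_num)]
    norm_num
  rw [this]; ring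

lemma t2_gg_integrableOn {ε : ℝ} (hε : 0 < ε) :
    IntegrableOn (fun t => t ^ 2 * gg ε t) (Ioi 0) := by
  have h := ((base_integrable hε (by norm_num : (-1:ℝ) < 3/2)).const_mul
    (ε / (2 * Real.sqrt (2 * π))))
  refine MeasureTheory.IntegrableOn.congr_fun h ?_ measurableSet_Ioi
  intro t ht
  have ht0 : (0:ℝ) < t := ht
  show ε / (2 * Real.sqrt (2 * π)) * (t ^ ((3:ℝ)/2) * Real.exp (-(ε ^ 2 / 2) * t)) = t ^ 2 * gg ε t
  unfold gg
  have : t ^ ((3:ℝ)/2) = t ^ 2 * t ^ (-(1/2):ℝ) := by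
    rw [← Real.rpow_natCast t 2, ← Real.rpow_add ht0]
    norm_num
  rw [this]; ring

lemma gg_total {ε : ℝ} (hε : 0 < ε) : ∫ t in Ioi (0:ℝ), gg ε t = 1 / 2 := by
  unfold gg
  rw [MeasureTheory.integral_const_mul]
  have e : ∀ t:ℝ, t ^ (-(1/2):ℝ) = t ^ ((1:ℝ)/2 - 1) := by intro t; norm_num
  simp_rw [e]
  have h1 : ∫ t in Ioi (0:ℝ), t ^ ((1:ℝ)/2 - 1) * Real.exp (-(ε ^ 2 / 2) * t)
      = (2 / ε ^ 2) ^ ((1:ℝ)/2) * Real.Gamma (1/2) :=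
    int_rpow_exp hε (show (0:ℝ) < 1/2 by norm_num)
  rw [h1, sqrt_two_div_sq hε, Real.Gamma_one_half_eq]
  have h2 : Real.sqrt (2 * π) = Real.sqrt 2 * Real.sqrt π := Real.sqrt_mul (by norm_num) π
  have hπ : (0:ℝ) < Real.sqrt π := Real.sqrt_pos.mpr Real.pi_pos
  have h2' : (0:ℝ) < Real.sqrt 2 := by positivity
  rw [h2]
  field_simp

lemma t_gg_total {ε : ℝ} (hε : 0 < ε) :
    ∫ t in Ioi (0:ℝ), t * gg ε t = 1 / (2 * ε ^ 2) := by
  have hcong : ∫ t in Ioi (0:ℝ), t * gg ε t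
      = ∫ t in Ioi (0:ℝ), ε / (2 * Real.sqrt (2 * π)) *
          (t ^ ((3:ℝ)/2 - 1) * Real.exp (-(ε ^ 2 / 2) * t)) := by
    apply setIntegral_congr_fun measurableSet_Ioi
    intro t ht
    have ht0 : (0:ℝ) < t := ht
    show t * gg ε t = ε / (2 * Real.sqrt (2 * π)) * (t ^ ((3:ℝ)/2 - 1) * Real.exp (-(ε ^ 2 / 2) * t))
    unfold gg
    have : t ^ ((3:ℝ)/2 - 1) = t * t ^ (-(1/2):ℝ) := by
      rw [← Real.rpow_one_add' ht0.le (by norm_num)]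
      norm_num
    rw [this]; ring
  rw [hcong, MeasureTheory.integral_const_mul]
  rw [int_rpow_exp hε (by norm_num : (0:ℝ) < 3/2)]
  have hG : Real.Gamma (3/2 : ℝ) = Real.sqrt π / 2 := by
    have h12 : (3/2 : ℝ) = 1/2 + 1 := by norm_num
    rw [h12, Real.Gamma_add_one (by norm_num), Real.Gamma_one_half_eq]
    ring
  have hpow : ((2 / ε ^ 2) ^ ((3:ℝ)/2) : ℝ) = (2 / ε ^ 2) * (Real.sqrt 2 / ε) := by
    have : ((3:ℝ)/2) = 1 + 1/2 := by norm_num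
    rw [this, Real.rpow_add (by positivity), Real.rpow_one, sqrt_two_div_sq hε]
  rw [hG, hpow]
  have h2 : Real.sqrt (2 * π) = Real.sqrt 2 * Real.sqrt π := Real.sqrt_mul (by norm_num) π
  have hπ : (0:ℝ) < Real.sqrt π := Real.sqrt_pos.mpr Real.pi_pos
  have h2' : (0:ℝ) < Real.sqrt 2 := by positivity
  rw [h2]
  field_simp

lemma gg_measurable (ε : ℝ) : Measurable (gg ε) := by
  unfold gg
  fun_prop

lemma floor_gg_integrableOn {ε : ℝ} (hε : 0 < ε) :
    IntegrableOn (fun t => (⌊t⌋₊ : ℝ) * gg ε t) (Ioi 0) := by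
  have hm : Measurable (fun t : ℝ => (⌊t⌋₊ : ℝ) * gg ε t) := by
    apply Measurable.mul _ (gg_measurable ε)
    exact measurable_from_top.comp Nat.measurable_floor
  apply (t_gg_integrableOn hε).mono' hm.aestronglyMeasurable
  filter_upwards [ae_restrict_mem measurableSet_Ioi] with t ht
  have ht0 : (0:ℝ) < t := ht
  have hg := gg_nonneg hε ht0
  rw [Real.norm_eq_abs, abs_mul, abs_of_nonneg (Nat.cast_nonneg _), abs_of_nonneg hg]
  exact mul_le_mul_of_nonneg_right (Nat.floor_le ht0.le) hg

lemma G_eq {ε : ℝ} (hε : 0 < ε) :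
    ∑' n : ℕ, ∫ t in Ioi ((n : ℝ) + 1), gg ε t
      = ∫ t in Ioi (0:ℝ), (⌊t⌋₊ : ℝ) * gg ε t := by
  set μ := volume.restrict (Ioi (0:ℝ)) with hμ
  set F : ℕ → ℝ → ℝ := fun n => (Ioi ((n:ℝ)+1)).indicator (gg ε) with hF
  have hsub : ∀ n : ℕ, Ioi ((n:ℝ)+1) ⊆ Ioi (0:ℝ) := by
    intro n t ht
    have : (0:ℝ) < (n:ℝ)+1 := by positivity
    exact lt_trans this ht
  have hFint : ∀ n, Integrable (F n) μ :=
    fun n => (gg_integrableOn hε).indicator measurableSet_Ioi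
  have hInt_eq : ∀ n, ∫ t, F n t ∂μ = ∫ t in Ioi ((n:ℝ)+1), gg ε t := by
    intro n
    rw [hF, integral_indicator measurableSet_Ioi, hμ,
      Measure.restrict_restrict measurableSet_Ioi, inter_eq_self_of_subset_left (hsub n)]
  have hFnonneg : ∀ n t, 0 ≤ F n t := by
    intro n t
    rw [hF]
    apply Set.indicator_nonneg
    intro x hx
    exact gg_nonneg hε (hsub n hx)
  have hnorm : ∀ n, (∫ t, ‖F n t‖ ∂μ) = ∫ t, F n t ∂μ := by
    intro n
    congr 1
    funext t
    exact Real.norm_of_nonneg (hFnonneg n t)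
  set C := ∫ t in Ioi (0:ℝ), t ^ 2 * gg ε t with hC
  have hbound : ∀ n, ∫ t, F n t ∂μ ≤ (1/((n:ℝ)+1)^2) * C := by
    intro n
    rw [hInt_eq n]
    have hn1 : (0:ℝ) < (n:ℝ)+1 := by positivity
    have step1 : ∫ t in Ioi ((n:ℝ)+1), gg ε t
        ≤ ∫ t in Ioi ((n:ℝ)+1), (1/((n:ℝ)+1)^2) * (t^2 * gg ε t) := by
      apply setIntegral_mono_on ((gg_integrableOn hε).mono_set (hsub n))
        (((t2_gg_integrableOn hε).mono_set (hsub n)).const_mul _) measurableSet_Ioi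
      intro t ht
      have ht1 : (n:ℝ)+1 < t := ht
      have htpos : (0:ℝ) < t := lt_trans hn1 ht1
      have hgg := gg_nonneg hε htpos
      have h1 : ((n:ℝ)+1)^2 ≤ t^2 := by nlinarith
      rw [div_mul_eq_mul_div, one_mul, le_div_iff₀ (by positivity)]
      nlinarith
    have step2 : ∫ t in Ioi ((n:ℝ)+1), (1/((n:ℝ)+1)^2) * (t^2 * gg ε t)
        ≤ (1/((n:ℝ)+1)^2) * C := by
      rw [MeasureTheory.integral_const_mul]
      apply mul_le_mul_of_nonneg_left _ (by positivity)
      apply setIntegral_mono_set (t2_gg_integrableOn hε)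
      · filter_upwards [ae_restrict_mem measurableSet_Ioi] with t ht
        have h0 : (0:ℝ) < t := ht
        exact mul_nonneg (sq_nonneg t) (gg_nonneg hε h0)
      · exact (hsub n).eventuallyLE
    exact le_trans step1 step2
  have hCnonneg : 0 ≤ C := by
    rw [hC]
    apply setIntegral_nonneg measurableSet_Ioi
    intro t ht
    have h0 : (0:ℝ) < t := ht
    exact mul_nonneg (sq_nonneg t) (gg_nonneg hε h0)
  have hsummable : Summable (fun n : ℕ => (1/((n:ℝ)+1)^2) * C) := by
    apply Summable.mul_right
    have h1 : Summable (fun n : ℕ => 1/((n:ℝ))^2) := by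
      exact_mod_cast Real.summable_one_div_nat_pow.mpr (by norm_num)
    have h2 := (summable_nat_add_iff 1).mpr h1
    apply h2.congr
    intro n
    push_cast
    ring
  have hsum : Summable (fun n => ∫ t, ‖F n t‖ ∂μ) := by
    apply Summable.of_nonneg_of_le (fun n => integral_nonneg (fun t => norm_nonneg _))
      (fun n => ?_) hsummable
    rw [hnorm n]
    exact hbound n
  have key := integral_tsum_of_summable_integral_norm hFint hsum
  have hae : ∀ᵐ t ∂μ, (∑' n, F n t) = (⌊t⌋₊:ℝ) * gg ε t := by
    have hz : volume (Set.range (Nat.cast : ℕ → ℝ)) = 0 :=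
      (Set.countable_range _).measure_zero _
    have h1 : ∀ᵐ t : ℝ, t ∉ Set.range (Nat.cast : ℕ → ℝ) := by
      rw [ae_iff]
      simp only [not_not]
      exact hz
    filter_upwards [ae_restrict_mem measurableSet_Ioi, ae_restrict_of_ae h1] with t ht hni
    have ht0 : (0:ℝ) < t := ht
    have hval : ∀ n : ℕ, F n t = if n < ⌊t⌋₊ then gg ε t else 0 := by
      intro n
      show (Ioi ((n:ℝ)+1)).indicator (gg ε) t = _
      by_cases h : (n:ℝ)+1 < t
      · rw [Set.indicator_of_mem (mem_Ioi.mpr h), if_pos]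
        have h2 : ((n+1:ℕ):ℝ) ≤ t := by push_cast; linarith
        have := Nat.le_floor h2
        omega
      · rw [Set.indicator_of_notMem (fun hc => h (mem_Ioi.mp hc)), if_neg]
        intro hc
        have h2 : ((n+1:ℕ):ℝ) ≤ (⌊t⌋₊:ℝ) := by exact_mod_cast Nat.succ_le_of_lt hc
        have h3 : (⌊t⌋₊:ℝ) ≤ t := Nat.floor_le ht0.le
        have h4 : (n:ℝ)+1 ≤ t := by push_cast at h2; linarith
        rcases eq_or_lt_of_le h4 with heq|hlt
        · exact hni ⟨n+1, by push_cast; linarith⟩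
        · exact h hlt
    have h5 : ∑' n, F n t = ∑' n : ℕ, (if n < ⌊t⌋₊ then gg ε t else 0) := tsum_congr hval
    rw [h5, tsum_eq_sum (s := Finset.range ⌊t⌋₊)
      (fun n hn => if_neg (fun hc => hn (Finset.mem_range.mpr hc)))]
    rw [Finset.sum_congr rfl (fun n hn => if_pos (Finset.mem_range.mp hn)),
      Finset.sum_const, Finset.card_range, nsmul_eq_mul]
  calc ∑' n : ℕ, ∫ t in Ioi ((n : ℝ) + 1), gg ε t
      = ∑' n, ∫ t, F n t ∂μ := tsum_congr (fun n => (hInt_eq n).symm)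
    _ = ∫ t, (∑' n, F n t) ∂μ := key
    _ = ∫ t in Ioi (0:ℝ), (⌊t⌋₊:ℝ) * gg ε t := integral_congr_ae hae

lemma habs {t : ℝ} (ht : 0 ≤ t) : |(⌊t⌋₊:ℝ) - t + 1/2| ≤ 1/2 := by
  have h1 : (⌊t⌋₊:ℝ) ≤ t := Nat.floor_le ht
  have h2 : t < (⌊t⌋₊:ℝ) + 1 := Nat.lt_floor_add_one t
  rw [abs_le]
  constructor <;> linarith

lemma H_integrableOn {ε : ℝ} (hε : 0 < ε) :
    IntegrableOn (fun t => ((⌊t⌋₊:ℝ) - t + 1/2) * gg ε t) (Ioi 0) := by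
  have heq : (fun t => ((⌊t⌋₊:ℝ) - t + 1/2) * gg ε t)
      = fun t => ((⌊t⌋₊:ℝ) * gg ε t - t * gg ε t) + (1/2) * gg ε t := by
    funext t; ring
  rw [heq]
  exact ((floor_gg_integrableOn hε).sub (t_gg_integrableOn hε)).add
    ((gg_integrableOn hε).const_mul _)

lemma sqrt_two_pi_ge_one : (1:ℝ) ≤ Real.sqrt (2 * π) := by
  rw [show (1:ℝ) = Real.sqrt 1 from (Real.sqrt_one).symm]
  apply Real.sqrt_le_sqrt
  nlinarith [Real.pi_gt_three]

lemma part1 {ε : ℝ} (hε : 0 < ε) :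
    ‖∫ t in Ioc (0:ℝ) 1, ((⌊t⌋₊:ℝ) - t + 1/2) * gg ε t‖ ≤ ε / 2 := by
  set c := ε / (2 * Real.sqrt (2 * π)) with hc
  have hcpos : 0 < c := by rw [hc]; positivity
  have hB : IntegrableOn (fun t : ℝ => (1/2) * c * t ^ (-(1/2):ℝ)) (Ioc (0:ℝ) 1) := by
    have h := intervalIntegral.intervalIntegrable_rpow' (a := (0:ℝ)) (b := 1)
      (by norm_num : (-1:ℝ) < -(1/2))
    rw [intervalIntegrable_iff_integrableOn_Ioc_of_le zero_le_one] at h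
    exact h.const_mul _
  have hle : ‖∫ t in Ioc (0:ℝ) 1, ((⌊t⌋₊:ℝ) - t + 1/2) * gg ε t‖
      ≤ ∫ t in Ioc (0:ℝ) 1, (1/2) * c * t ^ (-(1/2):ℝ) := by
    apply MeasureTheory.norm_integral_le_of_norm_le hB
    filter_upwards [ae_restrict_mem measurableSet_Ioc] with t ht
    have ht0 : (0:ℝ) < t := ht.1
    rw [Real.norm_eq_abs, abs_mul, mul_assoc]
    apply mul_le_mul (habs ht0.le) _ (abs_nonneg _) (by norm_num)
    rw [abs_of_nonneg (gg_nonneg hε ht0)]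
    exact le_trans (gg_le hε ht0) (le_of_eq rfl)
  have hval : ∫ t in Ioc (0:ℝ) 1, (1/2) * c * t ^ (-(1/2):ℝ) = c := by
    rw [MeasureTheory.integral_const_mul, ← intervalIntegral.integral_of_le zero_le_one,
      integral_rpow (Or.inl (by norm_num : (-1:ℝ) < -(1/2)))]
    rw [Real.one_rpow, Real.zero_rpow (by norm_num : (-(1/2):ℝ) + 1 ≠ 0)]
    norm_num
    ring
  rw [hval] at hle
  apply le_trans hle
  rw [hc]
  apply div_le_div_of_nonneg_left hε.le (by norm_num)
  nlinarith [sqrt_two_pi_ge_one]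

lemma cb {ε : ℝ} (hε : 0 < ε) (n : ℕ) :
    ‖∫ t in Ioc ((n:ℝ)+1) ((n:ℝ)+2), ((⌊t⌋₊:ℝ) - t + 1/2) * gg ε t‖
      ≤ (1/2) * (gg ε ((n:ℝ)+1) - gg ε ((n:ℝ)+2)) := by
  have hn1 : (0:ℝ) < (n:ℝ)+1 := by positivity
  have hIoo : Ioo ((n:ℝ)+1) ((n:ℝ)+2) ⊆ Ioi 0 := fun t ht => lt_trans hn1 ht.1
  rw [MeasureTheory.integral_Ioc_eq_integral_Ioo]
  have heqn : ∀ t ∈ Ioo ((n:ℝ)+1) ((n:ℝ)+2),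
      ((⌊t⌋₊:ℝ) - t + 1/2) * gg ε t = ((n:ℝ) + 3/2 - t) * gg ε t := by
    intro t ht
    have hfl : ⌊t⌋₊ = n + 1 := by
      rw [Nat.floor_eq_iff (le_of_lt (lt_trans hn1 ht.1))]
      constructor
      · push_cast
        exact le_of_lt ht.1
      · push_cast
        linarith [ht.2]
    rw [hfl]
    push_cast
    ring
  have hA : ∫ t in Ioo ((n:ℝ)+1) ((n:ℝ)+2), ((⌊t⌋₊:ℝ) - t + 1/2) * gg ε t
      = ∫ t in Ioo ((n:ℝ)+1) ((n:ℝ)+2), ((n:ℝ) + 3/2 - t) * gg ε t :=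
    setIntegral_congr_fun measurableSet_Ioo heqn
  rw [hA]
  have hint : IntegrableOn (fun t => ((n:ℝ) + 3/2 - t) * gg ε t) (Ioo ((n:ℝ)+1) ((n:ℝ)+2)) := by
    refine MeasureTheory.IntegrableOn.congr_fun ((H_integrableOn hε).mono_set hIoo) ?_
      measurableSet_Ioo
    intro t ht
    exact heqn t ht
  have hconst : IntegrableOn (fun t : ℝ => ((n:ℝ) + 3/2 - t) * gg ε ((n:ℝ)+2))
      (Ioo ((n:ℝ)+1) ((n:ℝ)+2)) :=
    (((continuous_const.sub continuous_id).mul continuous_const).integrableOn_Icc).mono_set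
      Ioo_subset_Icc_self
  have hsplit : ∫ t in Ioo ((n:ℝ)+1) ((n:ℝ)+2), ((n:ℝ) + 3/2 - t) * gg ε t
      = (∫ t in Ioo ((n:ℝ)+1) ((n:ℝ)+2), ((n:ℝ) + 3/2 - t) * (gg ε t - gg ε ((n:ℝ)+2)))
        + ∫ t in Ioo ((n:ℝ)+1) ((n:ℝ)+2), ((n:ℝ) + 3/2 - t) * gg ε ((n:ℝ)+2) := by
    rw [← integral_add (f := fun t => ((n:ℝ) + 3/2 - t) * (gg ε t - gg ε ((n:ℝ)+2)))
      (g := fun t : ℝ => ((n:ℝ) + 3/2 - t) * gg ε ((n:ℝ)+2)) ?_ hconst]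
    · apply setIntegral_congr_fun measurableSet_Ioo
      intro t _
      ring
    · refine MeasureTheory.IntegrableOn.congr_fun (hint.sub hconst) ?_ measurableSet_Ioo
      intro t _
      simp only [Pi.sub_apply]
      ring
  have hzero : ∫ t in Ioo ((n:ℝ)+1) ((n:ℝ)+2), ((n:ℝ) + 3/2 - t) * gg ε ((n:ℝ)+2) = 0 := by
    rw [← MeasureTheory.integral_Ioc_eq_integral_Ioo,
      ← intervalIntegral.integral_of_le (by linarith : (n:ℝ)+1 ≤ (n:ℝ)+2)]
    have : ∫ t in ((n:ℝ)+1)..((n:ℝ)+2), ((n:ℝ) + 3/2 - t) * gg ε ((n:ℝ)+2)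
        = (∫ t in ((n:ℝ)+1)..((n:ℝ)+2), ((n:ℝ) + 3/2 - t)) * gg ε ((n:ℝ)+2) :=
      intervalIntegral.integral_mul_const _ _
    rw [this]
    have h2 : ∫ t in ((n:ℝ)+1)..((n:ℝ)+2), ((n:ℝ) + 3/2 - t)
        = (∫ _t in ((n:ℝ)+1)..((n:ℝ)+2), ((n:ℝ) + 3/2))
          - ∫ t in ((n:ℝ)+1)..((n:ℝ)+2), t :=
      intervalIntegral.integral_sub (continuous_const.intervalIntegrable _ _)
        (continuous_id.intervalIntegrable _ _)
    rw [h2, intervalIntegral.integral_const, integral_id, smul_eq_mul]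
    ring_nf
  rw [hsplit, hzero, add_zero]
  have hmeas : volume (Ioo ((n:ℝ)+1) ((n:ℝ)+2)) = 1 := by
    rw [Real.volume_Ioo]
    norm_num
  have hbnd : ‖∫ t in Ioo ((n:ℝ)+1) ((n:ℝ)+2), ((n:ℝ) + 3/2 - t) * (gg ε t - gg ε ((n:ℝ)+2))‖
      ≤ ∫ _t in Ioo ((n:ℝ)+1) ((n:ℝ)+2), (1/2) * (gg ε ((n:ℝ)+1) - gg ε ((n:ℝ)+2)) := by
    apply MeasureTheory.norm_integral_le_of_norm_le
    · apply (integrableOn_const_iff (C := (1/2:ℝ) * (gg ε ((n:ℝ)+1) - gg ε ((n:ℝ)+2)))).mpr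
      right
      rw [hmeas]
      exact ENNReal.one_lt_top
    · filter_upwards [ae_restrict_mem measurableSet_Ioo] with t ht
      have ht0 : (0:ℝ) < t := hIoo ht
      rw [Real.norm_eq_abs, abs_mul]
      have e1 : |(n:ℝ) + 3/2 - t| ≤ 1/2 := by
        rw [abs_le]
        constructor <;> [linarith [ht.2]; linarith [ht.1]]
      have e2 : |gg ε t - gg ε ((n:ℝ)+2)| ≤ gg ε ((n:ℝ)+1) - gg ε ((n:ℝ)+2) := by
        rw [abs_of_nonneg (sub_nonneg.mpr (gg_anti hε ht0 ht.2.le))]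
        have := gg_anti hε hn1 ht.1.le
        linarith
      exact mul_le_mul e1 e2 (abs_nonneg _) (by norm_num)
  apply le_trans hbnd
  rw [setIntegral_const, measureReal_def, hmeas]
  simp

lemma part2 {ε : ℝ} (hε : 0 < ε) :
    ‖∫ t in Ioi (1:ℝ), ((⌊t⌋₊:ℝ) - t + 1/2) * gg ε t‖ ≤ ε / 2 := by
  set H := fun t : ℝ => ((⌊t⌋₊:ℝ) - t + 1/2) * gg ε t with hH
  set S : ℕ → Set ℝ := fun n => Ioc ((n:ℝ)+1) ((n:ℝ)+2) with hS
  have hU : Ioi (1:ℝ) = ⋃ n, S n := by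
    ext t
    simp only [mem_Ioi, mem_iUnion, hS, mem_Ioc]
    constructor
    · intro ht
      have ht0 : (0:ℝ) ≤ t := by linarith
      have h2 : 2 ≤ ⌈t⌉₊ := by
        have : 1 < ⌈t⌉₊ := Nat.lt_ceil.mpr (by exact_mod_cast ht)
        omega
      have hcast : ((⌈t⌉₊ - 2 : ℕ):ℝ) = (⌈t⌉₊:ℝ) - 2 := by
        rw [Nat.cast_sub h2]
        norm_num
      refine ⟨⌈t⌉₊ - 2, ?_, ?_⟩
      · have hc : (⌈t⌉₊:ℝ) < t + 1 := Nat.ceil_lt_add_one ht0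
        rw [hcast]
        linarith
      · have := Nat.le_ceil t
        rw [hcast]
        linarith
    · rintro ⟨n, h1, _⟩
      have : (0:ℝ) ≤ n := Nat.cast_nonneg n
      linarith
  have hintU : IntegrableOn H (⋃ n, S n) := by
    rw [← hU]
    exact (H_integrableOn hε).mono_set (fun t ht => mem_Ioi.mpr (lt_trans one_pos (mem_Ioi.mp ht)))
  have hdisj : Pairwise (Function.onFun Disjoint S) := by
    have key : ∀ m n : ℕ, m < n → Disjoint (S m) (S n) := by
      intro m n hmn
      apply Set.Ioc_disjoint_Ioc.mpr
      have hmn' : (m:ℝ) + 2 ≤ (n:ℝ) + 1 := by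
        have : (m:ℝ) + 1 ≤ n := by exact_mod_cast hmn
        linarith
      calc min ((m:ℝ)+2) ((n:ℝ)+2) ≤ (m:ℝ)+2 := min_le_left _ _
        _ ≤ (n:ℝ)+1 := hmn'
        _ ≤ max ((m:ℝ)+1) ((n:ℝ)+1) := le_max_right _ _
    intro m n hmn
    rcases lt_or_gt_of_ne hmn with h|h
    · exact key m n h
    · exact (key n m h).symm
  have HS := MeasureTheory.hasSum_integral_iUnion (fun n => measurableSet_Ioc) hdisj hintU
  set u : ℕ → ℝ := fun n => gg ε ((n:ℝ)+1) with hu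
  have hcast2 : ∀ n : ℕ, u (n+1) = gg ε ((n:ℝ)+2) := by
    intro n
    rw [hu]
    push_cast
    ring_nf
  have hu_anti : ∀ n, u (n+1) ≤ u n := by
    intro n
    rw [hcast2 n, hu]
    exact gg_anti hε (by positivity) (by linarith)
  have hu_nonneg : ∀ n, 0 ≤ u n := fun n => gg_nonneg hε (by positivity)
  have hu_tendsto : Tendsto u atTop (𝓝 0) := by
    have hb : ∀ n : ℕ, u n ≤ ε / (2 * Real.sqrt (2 * π)) * ((n:ℝ)+1) ^ (-(1/2):ℝ) :=
      fun n => gg_le hε (by positivity)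
    have l1 : Tendsto (fun x:ℝ => x ^ (-(1/2):ℝ)) atTop (𝓝 0) := by
      have := tendsto_rpow_neg_atTop (show (0:ℝ) < 1/2 by norm_num)
      simpa using this
    have l2 : Tendsto (fun n:ℕ => (n:ℝ)+1) atTop atTop :=
      tendsto_atTop_add_const_right _ 1 tendsto_natCast_atTop_atTop
    have l3 : Tendsto (fun n:ℕ => ε / (2 * Real.sqrt (2 * π)) * ((n:ℝ)+1) ^ (-(1/2):ℝ))
        atTop (𝓝 0) := by
      have := (l1.comp l2).const_mul (ε / (2 * Real.sqrt (2 * π)))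
      simpa using this
    exact squeeze_zero hu_nonneg hb l3
  have htel : HasSum (fun n => u n - u (n+1)) (u 0) := by
    rw [hasSum_iff_tendsto_nat_of_nonneg (fun n => sub_nonneg.mpr (hu_anti n))]
    have hps : ∀ N, ∑ i ∈ Finset.range N, (u i - u (i+1)) = u 0 - u N :=
      fun N => Finset.sum_range_sub' u N
    simp only [hps]
    simpa using tendsto_const_nhds.sub hu_tendsto
  have hcb : ∀ n, ‖∫ t in S n, H t‖ ≤ (1/2) * (u n - u (n+1)) := by
    intro n
    rw [hcast2 n]
    exact cb hε n
  have hd_summable : Summable (fun n => (1/2) * (u n - u (n+1))) :=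
    (htel.mul_left (1/2)).summable
  have hsum_norm : Summable (fun n => ‖∫ t in S n, H t‖) :=
    Summable.of_nonneg_of_le (fun n => norm_nonneg _) hcb hd_summable
  have hchain : ‖∫ t in Ioi (1:ℝ), H t‖ ≤ (1/2) * u 0 := by
    calc ‖∫ t in Ioi (1:ℝ), H t‖ = ‖∑' n, ∫ t in S n, H t‖ := by
          rw [hU] at *
          rw [← HS.tsum_eq]
      _ ≤ ∑' n, ‖∫ t in S n, H t‖ := norm_tsum_le_tsum_norm hsum_norm
      _ ≤ ∑' n, (1/2) * (u n - u (n+1)) := Summable.tsum_le_tsum hcb hsum_norm hd_summable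
      _ = (1/2) * u 0 := (htel.mul_left (1/2)).tsum_eq
  apply le_trans hchain
  have hu0 : u 0 ≤ ε / (2 * Real.sqrt (2 * π)) := by
    have h := gg_le (t := ((0:ℕ):ℝ)+1) hε (by positivity)
    rw [hu]
    apply le_trans h
    norm_num [Real.one_rpow]
  have hd : ε / (2 * Real.sqrt (2 * π)) ≤ ε := by
    calc ε / (2 * Real.sqrt (2 * π)) ≤ ε / 1 := by
          apply div_le_div_of_nonneg_left hε.le one_pos
          nlinarith [sqrt_two_pi_ge_one]
      _ = ε := div_one ε
  nlinarith [hu0, hd]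

/-- `lim_{ε ↓ 0} (G(ε) − 1/(2ε²)) = −1/4`, where
`G(ε) = ∑_{n≥1} (1/√(2π))·∫_{ε√n}^∞ e^{-x²/2} dx`. -/
theorem limit_G_minus_half_inv_sq :
    Tendsto (fun ε : ℝ =>
        (∑' n : ℕ, (1 / Real.sqrt (2 * π)) *
          ∫ x in Ioi (ε * Real.sqrt ((n : ℝ) + 1)), Real.exp (-x ^ 2 / 2))
        - 1 / (2 * ε ^ 2))
      (nhdsWithin 0 (Ioi 0)) (nhds (-1 / 4)) := by
  have key : ∀ ε : ℝ, 0 < ε →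
      |((∑' n : ℕ, (1 / Real.sqrt (2 * π)) *
          ∫ x in Ioi (ε * Real.sqrt ((n : ℝ) + 1)), Real.exp (-x ^ 2 / 2))
        - 1 / (2 * ε ^ 2)) - (-1/4)| ≤ ε := by
    intro ε hε
    have c1 := floor_gg_integrableOn hε
    have c2 := t_gg_integrableOn hε
    have c3 := gg_integrableOn hε
    have hG : (∑' n : ℕ, (1 / Real.sqrt (2 * π)) *
          ∫ x in Ioi (ε * Real.sqrt ((n : ℝ) + 1)), Real.exp (-x ^ 2 / 2))
        = ∫ t in Ioi (0:ℝ), (⌊t⌋₊ : ℝ) * gg ε t := by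
      rw [← G_eq hε]
      exact tsum_congr (fun n => (cov hε (by positivity : (0:ℝ) ≤ (n:ℝ)+1)).symm)
    have hsum : ∫ t in Ioi (0:ℝ), ((⌊t⌋₊:ℝ) - t + 1/2) * gg ε t
        = (∫ t in Ioi (0:ℝ), (⌊t⌋₊:ℝ) * gg ε t) - (∫ t in Ioi (0:ℝ), t * gg ε t)
          + (1/2) * ∫ t in Ioi (0:ℝ), gg ε t := by
      rw [← MeasureTheory.integral_const_mul, ← integral_sub c1 c2]
      have hadd := integral_add (μ := volume.restrict (Ioi (0:ℝ)))
        (f := fun a : ℝ => (⌊a⌋₊:ℝ) * gg ε a - a * gg ε a)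
        (g := fun a : ℝ => (1/2) * gg ε a) (c1.sub c2) (c3.const_mul _)
      rw [← hadd]
      apply setIntegral_congr_fun measurableSet_Ioi
      intro t _
      ring
    have hval : (∑' n : ℕ, (1 / Real.sqrt (2 * π)) *
          ∫ x in Ioi (ε * Real.sqrt ((n : ℝ) + 1)), Real.exp (-x ^ 2 / 2))
        - 1 / (2 * ε ^ 2) - (-1/4)
        = ∫ t in Ioi (0:ℝ), ((⌊t⌋₊:ℝ) - t + 1/2) * gg ε t := by
      rw [hG, ← t_gg_total hε, hsum, gg_total hε]
      ring
    rw [hval]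
    have hs1 : Ioc (0:ℝ) 1 ⊆ Ioi 0 := fun t ht => ht.1
    have hs2 : Ioi (1:ℝ) ⊆ Ioi 0 := fun t ht => mem_Ioi.mpr (lt_trans one_pos (mem_Ioi.mp ht))
    have hsplit : ∫ t in Ioi (0:ℝ), ((⌊t⌋₊:ℝ) - t + 1/2) * gg ε t
        = (∫ t in Ioc (0:ℝ) 1, ((⌊t⌋₊:ℝ) - t + 1/2) * gg ε t)
          + ∫ t in Ioi (1:ℝ), ((⌊t⌋₊:ℝ) - t + 1/2) * gg ε t := by
      rw [← Set.Ioc_union_Ioi_eq_Ioi (zero_le_one (α := ℝ))]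
      apply setIntegral_union _ measurableSet_Ioi ((H_integrableOn hε).mono_set hs1)
        ((H_integrableOn hε).mono_set hs2)
      rw [Set.disjoint_left]
      rintro t ht1 ht2
      exact absurd ht1.2 (not_le.mpr ht2)
    rw [hsplit]
    have p1 := part1 hε
    have p2 := part2 hε
    rw [Real.norm_eq_abs] at p1 p2
    calc |(∫ t in Ioc (0:ℝ) 1, ((⌊t⌋₊:ℝ) - t + 1/2) * gg ε t)
          + ∫ t in Ioi (1:ℝ), ((⌊t⌋₊:ℝ) - t + 1/2) * gg ε t|
        ≤ |(∫ t in Ioc (0:ℝ) 1, ((⌊t⌋₊:ℝ) - t + 1/2) * gg ε t)|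
          + |∫ t in Ioi (1:ℝ), ((⌊t⌋₊:ℝ) - t + 1/2) * gg ε t| := abs_add_le _ _
      _ ≤ ε/2 + ε/2 := add_le_add p1 p2
      _ = ε := by ring
  apply tendsto_of_tendsto_of_tendsto_of_le_of_le' (g := fun ε : ℝ => -1/4 - ε)
    (h := fun ε : ℝ => -1/4 + ε)
  · have h : Tendsto (fun ε : ℝ => -1/4 - ε) (𝓝 0) (𝓝 (-1/4 - 0)) :=
      tendsto_const_nhds.sub tendsto_id
    simpa using h.mono_left nhdsWithin_le_nhds
  · have h : Tendsto (fun ε : ℝ => -1/4 + ε) (𝓝 0) (𝓝 (-1/4 + 0)) :=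
      tendsto_const_nhds.add tendsto_id
    simpa using h.mono_left nhdsWithin_le_nhds
  · filter_upwards [self_mem_nhdsWithin] with ε hε
    have h := abs_le.mp (key ε hε)
    linarith [h.1]
  · filter_upwards [self_mem_nhdsWithin] with ε hε
    have h := abs_le.mp (key ε hε)
    linarith [h.2]
end

section
/- The limit as ε ↓ 0 of (F(ε) + ln ε) equals −(1/2)·ln 2, where F(ε) = ∑_{n=1}^∞ (1/n)·(1/√(2π))·∫_{ε√n}^∞ e^{-x²/2} dx. -/
open Real MeasureTheory Set Filter
open scoped Topology

noncomputable section AuxFPL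

/-- real harmonic number -/
def HFPL (N : ℕ) : ℝ := (harmonic N : ℝ)

lemma HFPL_nonneg (N : ℕ) : 0 ≤ HFPL N := by
  unfold HFPL
  rcases Nat.eq_zero_or_pos N with h | h
  · simp [h]
  · exact_mod_cast (harmonic_pos (by omega)).le

lemma HFPL_zero : HFPL 0 = 0 := by simp [HFPL]

lemma le_HFPL (N : ℕ) : Real.log (N + 1) ≤ HFPL N := by
  have h := Real.strictMono_eulerMascheroniSeq.monotone (Nat.zero_le N)
  rw [Real.eulerMascheroniSeq_zero] at h
  unfold Real.eulerMascheroniSeq at h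
  unfold HFPL
  linarith [h]

lemma HFPL_le {N : ℕ} (h : 1 ≤ N) : HFPL N ≤ Real.log N + 1 := by
  have h2 := Real.strictAnti_eulerMascheroniSeq'.antitone h
  rw [Real.eulerMascheroniSeq'_one] at h2
  unfold Real.eulerMascheroniSeq' at h2
  rw [if_neg (by omega)] at h2
  unfold HFPL
  linarith [h2]

lemma tendsto_HFPL_sub_log :
    Tendsto (fun n : ℕ => HFPL n - Real.log n) atTop (𝓝 Real.eulerMascheroniConstant) :=
  Real.tendsto_harmonic_sub_log

/-- the index function -/
def mFPL (ε x : ℝ) : ℕ := ⌈(x / ε) ^ 2⌉₊ - 1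

lemma measurable_HmFPL (ε : ℝ) : Measurable fun x : ℝ => HFPL (mFPL ε x) := by
  have h1 : Measurable fun x : ℝ => (x / ε) ^ 2 :=
    (measurable_id.div_const ε).pow_const 2
  have h2 : Measurable fun x : ℝ => mFPL ε x := by
    unfold mFPL
    exact (h1.nat_ceil).sub (measurable_const)
  exact (measurable_from_nat (f := HFPL)).comp h2

lemma mFPL_eq_zero {ε x : ℝ} (h : x ≤ ε) (hx : 0 < x) : mFPL ε x = 0 := by
  have hε : 0 < ε := lt_of_lt_of_le hx h
  have h1 : (x / ε) ^ 2 ≤ 1 := by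
    have : x / ε ≤ 1 := (div_le_one hε).2 h
    have h0 : 0 ≤ x / ε := le_of_lt (div_pos hx hε)
    nlinarith
  have : ⌈(x / ε) ^ 2⌉₊ ≤ 1 := Nat.ceil_le.2 (by exact_mod_cast h1)
  unfold mFPL; omega

lemma mFPL_bounds {ε x : ℝ} (hε : 0 < ε) (hx : ε < x) :
    1 ≤ mFPL ε x ∧ (mFPL ε x : ℝ) ≤ (x / ε) ^ 2 ∧ (x / ε) ^ 2 ≤ (mFPL ε x : ℝ) + 1 := by
  have hu : 1 < x / ε := (one_lt_div hε).2 hx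
  have hu2 : 1 < (x / ε) ^ 2 := by nlinarith
  have hM : 1 < ⌈(x / ε) ^ 2⌉₊ := by
    rw [Nat.lt_ceil]; exact_mod_cast hu2
  have hm1 : 1 ≤ mFPL ε x := by unfold mFPL; omega
  have hcast : (mFPL ε x : ℝ) = (⌈(x / ε) ^ 2⌉₊ : ℝ) - 1 := by
    unfold mFPL
    have : (1:ℕ) ≤ ⌈(x / ε) ^ 2⌉₊ := le_of_lt hM
    push_cast [Nat.cast_sub this]
    ring
  constructor
  · exact hm1
  constructor
  · rw [hcast]
    have := Nat.ceil_lt_add_one (le_of_lt (lt_trans one_pos hu2))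
    linarith
  · rw [hcast]
    have := Nat.le_ceil ((x / ε) ^ 2)
    linarith

lemma log_sq {x ε : ℝ} (hε : 0 < ε) (hx : 0 < x) :
    Real.log ((x / ε) ^ 2) = 2 * Real.log x - 2 * Real.log ε := by
  rw [Real.log_pow, Real.log_div (ne_of_gt hx) (ne_of_gt hε)]
  ring

lemma HmFPL_bounds {ε x : ℝ} (hε : 0 < ε) (hx : ε < x) :
    2 * Real.log x - 2 * Real.log ε ≤ HFPL (mFPL ε x) ∧
      HFPL (mFPL ε x) ≤ 1 + 2 * Real.log x - 2 * Real.log ε := by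
  obtain ⟨hm1, hle, hge⟩ := mFPL_bounds hε hx
  have hx0 : 0 < x := lt_trans hε hx
  have hm0 : (0:ℝ) < (mFPL ε x : ℝ) := by exact_mod_cast hm1
  constructor
  · calc 2 * Real.log x - 2 * Real.log ε = Real.log ((x / ε) ^ 2) := (log_sq hε hx0).symm
      _ ≤ Real.log ((mFPL ε x : ℝ) + 1) := by
          apply Real.log_le_log (by positivity) hge
      _ ≤ HFPL (mFPL ε x) := by
          have := le_HFPL (mFPL ε x); exact_mod_cast this
  · calc HFPL (mFPL ε x) ≤ Real.log (mFPL ε x) + 1 := HFPL_le hm1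
      _ ≤ Real.log ((x / ε) ^ 2) + 1 := by
          have := Real.log_le_log hm0 hle; linarith
      _ = 1 + 2 * Real.log x - 2 * Real.log ε := by rw [log_sq hε hx0]; ring

lemma abs_log_le {x : ℝ} (hx : 0 < x) : |Real.log x| ≤ x + 2 * x ^ (-(1/2) : ℝ) := by
  have hrp : 0 < x ^ (-(1/2) : ℝ) := Real.rpow_pos_of_pos hx _
  rcases le_or_gt 1 x with h | h
  · have h0 : 0 ≤ Real.log x := Real.log_nonneg h
    rw [abs_of_nonneg h0]
    have : Real.log x ≤ x - 1 := Real.log_le_sub_one_of_pos hx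
    linarith
  · have h0 : Real.log x < 0 := Real.log_neg hx h
    rw [abs_of_neg h0]
    have h1 : Real.log (x ^ (-(1/2) : ℝ)) = -(1/2) * Real.log x := Real.log_rpow hx _
    have h2 : Real.log (x ^ (-(1/2) : ℝ)) ≤ x ^ (-(1/2) : ℝ) - 1 :=
      Real.log_le_sub_one_of_pos hrp
    nlinarith

lemma integrable_gauss_rpow {s : ℝ} (hs : -1 < s) :
    IntegrableOn (fun x : ℝ => x ^ s * Real.exp (-x ^ 2 / 2)) (Ioi 0) := by
  have h := integrableOn_rpow_mul_exp_neg_mul_sq (b := 1/2) one_half_pos hs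
  have heq : ∀ x : ℝ, -(1/2) * x ^ 2 = -x ^ 2 / 2 := by intro x; ring
  simpa only [heq] using h

lemma integrable_gauss : IntegrableOn (fun x : ℝ => Real.exp (-x ^ 2 / 2)) (Ioi 0) := by
  have h := integrable_gauss_rpow (s := 0) (by norm_num)
  apply h.congr_fun _ measurableSet_Ioi
  intro x hx
  simp

lemma gauss_int : ∫ x in Ioi (0:ℝ), Real.exp (-x ^ 2 / 2) = Real.sqrt (2 * π) / 2 := by
  have h := integral_gaussian_Ioi (1/2)
  have heq : ∀ x : ℝ, Real.exp (-(1/2) * x ^ 2) = Real.exp (-x ^ 2 / 2) := by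
    intro x; ring_nf
  rw [show π / (1/2 : ℝ) = 2 * π by ring] at h
  simpa only [heq] using h

lemma integrable_bound : IntegrableOn
    (fun x : ℝ => Real.exp (-x ^ 2 / 2) * (1 + 2 * (x + 2 * x ^ (-(1/2) : ℝ)))) (Ioi 0) := by
  have h0 : IntegrableOn (fun x : ℝ => Real.exp (-x ^ 2 / 2)) (Ioi 0) := integrable_gauss
  have h1 : IntegrableOn (fun x : ℝ => x ^ (1:ℝ) * Real.exp (-x ^ 2 / 2)) (Ioi 0) :=
    integrable_gauss_rpow (by norm_num)
  have h2 : IntegrableOn (fun x : ℝ => x ^ (-(1/2):ℝ) * Real.exp (-x ^ 2 / 2)) (Ioi 0) :=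
    integrable_gauss_rpow (by norm_num)
  have h1' : IntegrableOn (fun x : ℝ => x * Real.exp (-x ^ 2 / 2)) (Ioi 0) := by
    apply h1.congr_fun _ measurableSet_Ioi
    intro x hx
    simp
  have h3 : IntegrableOn (fun x : ℝ => Real.exp (-x ^ 2 / 2) + (2 * (x * Real.exp (-x ^ 2 / 2)) +
      4 * (x ^ (-(1/2):ℝ) * Real.exp (-x ^ 2 / 2)))) (Ioi 0) :=
    h0.add ((h1'.const_mul 2).add (h2.const_mul 4))
  apply h3.congr_fun _ measurableSet_Ioi
  intro x hx
  ring

lemma integrable_gauss_log :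
    IntegrableOn (fun x : ℝ => Real.exp (-x ^ 2 / 2) * Real.log x) (Ioi 0) := by
  apply Integrable.mono' integrable_bound
  · exact (((measurable_id.pow_const 2).neg.div_const 2).exp.mul
      Real.measurable_log).aestronglyMeasurable
  · rw [ae_restrict_iff' measurableSet_Ioi]
    filter_upwards with x hx
    have hx0 : (0:ℝ) < x := hx
    have he : 0 < Real.exp (-x ^ 2 / 2) := Real.exp_pos _
    rw [Real.norm_eq_abs, abs_mul, abs_of_pos he]
    have h1 := abs_log_le hx0
    have hrp : 0 < x ^ (-(1/2) : ℝ) := Real.rpow_pos_of_pos hx0 _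
    nlinarith

/-- derivative of Γ at 1/2 as an integral -/
lemma gammaDeriv_int :
    ∫ t in Ioi (0:ℝ), t ^ (-(1/2) : ℝ) * (Real.log t * Real.exp (-t)) =
      -Real.sqrt π * (Real.eulerMascheroniConstant + 2 * Real.log 2) := by
  set I : ℂ := ∫ t : ℝ in Ioi 0, (t:ℂ) ^ ((1/2:ℂ) - 1) * (Real.log t * Real.exp (-t)) with hI
  have hci : HasDerivAt Complex.GammaIntegral I (1/2) :=
    Complex.hasDerivAt_GammaIntegral (by norm_num)
  have hev : Complex.Gamma =ᶠ[𝓝 (1/2:ℂ)] Complex.GammaIntegral := by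
    have hopen : IsOpen {s : ℂ | 0 < s.re} := isOpen_lt continuous_const Complex.continuous_re
    filter_upwards [hopen.mem_nhds (by norm_num : ((1/2:ℂ) ∈ {s : ℂ | 0 < s.re}))] with s hs
    exact Complex.Gamma_eq_integral hs
  have hcg : HasDerivAt Complex.Gamma I (1/2:ℂ) := hci.congr_of_eventuallyEq hev
  have hcg' : HasDerivAt Complex.Gamma I (((1/2:ℝ):ℂ)) := by
    convert hcg using 2
    norm_num
  have hr : HasDerivAt (fun x : ℝ => (Complex.Gamma x).re) I.re (1/2) := hcg'.real_of_complex
  have hfeq : (fun x : ℝ => (Complex.Gamma x).re) = Real.Gamma := by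
    funext x
    rw [Complex.Gamma_ofReal]
    exact Complex.ofReal_re _
  rw [hfeq] at hr
  have huniq : I.re = -Real.sqrt π * (Real.eulerMascheroniConstant + 2 * Real.log 2) :=
    hr.unique Real.hasDerivAt_Gamma_one_half
  have hIval : I = ((∫ t in Ioi (0:ℝ), t ^ (-(1/2) : ℝ) * (Real.log t * Real.exp (-t)) : ℝ) : ℂ) := by
    have haux : ((∫ t in Ioi (0:ℝ), t ^ (-(1/2) : ℝ) * (Real.log t * Real.exp (-t)) : ℝ) : ℂ)
        = ∫ t in Ioi (0:ℝ), ((t ^ (-(1/2) : ℝ) * (Real.log t * Real.exp (-t)) : ℝ) : ℂ) :=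
      integral_ofReal.symm
    rw [hI, haux]
    apply setIntegral_congr_fun measurableSet_Ioi
    intro t ht
    have ht0 : (0:ℝ) < t := ht
    push_cast [Complex.ofReal_cpow ht0.le]
    norm_num
  rw [hIval] at huniq
  exact_mod_cast huniq

lemma integrable_exp_sq_Ioi : IntegrableOn (fun x : ℝ => Real.exp (-x ^ 2)) (Ioi 0) := by
  have h := (integrable_exp_neg_mul_sq (by norm_num : (0:ℝ) < 1)).integrableOn (s := Ioi 0)
  simpa using h

lemma integrable_log_exp_sq :
    IntegrableOn (fun x : ℝ => Real.log x * Real.exp (-x ^ 2)) (Ioi 0) := by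
  apply Integrable.mono' integrable_bound
  · exact (Real.measurable_log.mul ((measurable_id.pow_const 2).neg.exp)).aestronglyMeasurable
  · rw [ae_restrict_iff' measurableSet_Ioi]
    filter_upwards with x hx
    have hx0 : (0:ℝ) < x := hx
    have he2 : Real.exp (-x ^ 2) ≤ Real.exp (-x ^ 2 / 2) := by
      apply Real.exp_le_exp.2; nlinarith [sq_nonneg x]
    have he : 0 < Real.exp (-x ^ 2) := Real.exp_pos _
    have hep : 0 < Real.exp (-x ^ 2 / 2) := Real.exp_pos _
    rw [Real.norm_eq_abs, abs_mul, abs_of_pos he]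
    have h1 := abs_log_le hx0
    have hrp : 0 < x ^ (-(1/2) : ℝ) := Real.rpow_pos_of_pos hx0 _
    have h6 : |Real.log x| * Real.exp (-x ^ 2) ≤ (x + 2 * x ^ (-(1/2):ℝ)) * Real.exp (-x ^ 2 / 2) :=
      mul_le_mul h1 he2 he.le (by positivity)
    nlinarith

lemma exp_sq_int : ∫ x in Ioi (0:ℝ), Real.exp (-x ^ 2) = Real.sqrt π / 2 := by
  have h := integral_gaussian_Ioi 1
  simpa using h

lemma M_val : ∫ x in Ioi (0:ℝ), Real.log x * Real.exp (-x ^ 2)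
    = -Real.sqrt π * (Real.eulerMascheroniConstant + 2 * Real.log 2) / 4 := by
  have hsub := integral_comp_rpow_Ioi_of_pos
    (g := fun t : ℝ => t ^ (-(1/2) : ℝ) * (Real.log t * Real.exp (-t))) (p := 2) two_pos
  rw [gammaDeriv_int] at hsub
  have heq : EqOn (fun x : ℝ => (2 * x ^ ((2:ℝ) - 1)) • ((x ^ (2:ℝ)) ^ (-(1/2) : ℝ) *
        (Real.log (x ^ (2:ℝ)) * Real.exp (-(x ^ (2:ℝ))))))
      (fun x : ℝ => 4 * (Real.log x * Real.exp (-x ^ 2))) (Ioi 0) := by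
    intro x hx
    have hx0 : (0:ℝ) < x := hx
    have h2 : x ^ (2:ℝ) = x ^ (2:ℕ) := by
      rw [← Real.rpow_natCast x 2]; norm_num
    have h3 : (x ^ (2:ℝ)) ^ (-(1/2) : ℝ) = x⁻¹ := by
      rw [← Real.rpow_mul hx0.le]
      norm_num [Real.rpow_neg_one]
    have h4 : Real.log (x ^ (2:ℝ)) = 2 * Real.log x := Real.log_rpow hx0 2
    have h5 : x ^ ((2:ℝ) - 1) = x := by
      norm_num [Real.rpow_one]
    simp only [smul_eq_mul]
    rw [h3, h4, h2, h5]
    field_simp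
    ring
  rw [setIntegral_congr_fun measurableSet_Ioi heq] at hsub
  rw [integral_const_mul] at hsub
  linarith

lemma sqrt2_pos : (0:ℝ) < Real.sqrt 2 := Real.sqrt_pos.2 two_pos

/-- the log-Gaussian integral -/
lemma log_gauss_int :
    ∫ x in Ioi (0:ℝ), Real.exp (-x ^ 2 / 2) * Real.log x =
      -(Real.sqrt (2 * π) / 4) * (Real.eulerMascheroniConstant + Real.log 2) := by
  have hs := integral_comp_mul_left_Ioi
    (g := fun y : ℝ => Real.log y * Real.exp (-y ^ 2 / 2)) 0 sqrt2_pos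
  rw [mul_zero] at hs
  have heq : EqOn (fun x : ℝ =>
      Real.log (Real.sqrt 2 * x) * Real.exp (-(Real.sqrt 2 * x) ^ 2 / 2))
      (fun x : ℝ => Real.log (Real.sqrt 2) * Real.exp (-x ^ 2)
        + Real.log x * Real.exp (-x ^ 2)) (Ioi 0) := by
    intro x hx
    have hx0 : (0:ℝ) < x := hx
    have hsq : -(Real.sqrt 2 * x) ^ 2 / 2 = -x ^ 2 := by
      rw [mul_pow, Real.sq_sqrt (by norm_num : (0:ℝ) ≤ 2)]; ring
    simp only
    rw [hsq, Real.log_mul sqrt2_pos.ne' hx0.ne']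
    ring
  rw [setIntegral_congr_fun measurableSet_Ioi heq] at hs
  rw [integral_add (integrable_exp_sq_Ioi.const_mul _) integrable_log_exp_sq] at hs
  rw [integral_const_mul, exp_sq_int, M_val] at hs
  have target : ∫ x in Ioi (0:ℝ), Real.exp (-x ^ 2 / 2) * Real.log x
      = ∫ x in Ioi (0:ℝ), Real.log x * Real.exp (-x ^ 2 / 2) := by
    apply setIntegral_congr_fun measurableSet_Ioi; intro x _; simp only; ring
  rw [target]
  rw [smul_eq_mul] at hs
  have hK : ∫ y in Ioi (0:ℝ), Real.log y * Real.exp (-y ^ 2 / 2)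
      = Real.sqrt 2 * (Real.log (Real.sqrt 2) * (Real.sqrt π / 2)
        + -Real.sqrt π * (Real.eulerMascheroniConstant + 2 * Real.log 2) / 4) := by
    rw [hs, ← mul_assoc, mul_inv_cancel₀ sqrt2_pos.ne', one_mul]
  rw [hK, Real.log_sqrt (by norm_num : (0:ℝ) ≤ 2),
    Real.sqrt_mul (by norm_num : (0:ℝ) ≤ 2) π]
  ring

lemma HFPL_eq (N : ℕ) : HFPL N = ∑ i ∈ Finset.range N, 1 / ((i:ℝ) + 1) := by
  unfold HFPL harmonic
  push_cast
  simp [one_div]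

lemma integrable_gauss4 : IntegrableOn (fun x : ℝ => Real.exp (-x ^ 2 / 4)) (Ioi 0) := by
  have h := (integrable_exp_neg_mul_sq (by norm_num : (0:ℝ) < 1/4)).integrableOn (s := Ioi 0)
  have heq : ∀ x : ℝ, -(1/4) * x ^ 2 = -x ^ 2 / 4 := fun x => by ring
  simpa only [heq] using h

def aFPL (ε : ℝ) (n : ℕ) : ℝ := ε * Real.sqrt ((n : ℝ) + 1)

def fFPL (ε : ℝ) (n : ℕ) : ℝ → ℝ :=
  (Ioi (aFPL ε n)).indicator (fun x => 1 / ((n : ℝ) + 1) * Real.exp (-x ^ 2 / 2))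

/-- Fubini step -/
lemma keyRepr {ε : ℝ} (hε : 0 < ε) :
    (∑' n : ℕ, (1 / ((n : ℝ) + 1) *
      ∫ x in Ioi (ε * Real.sqrt ((n : ℝ) + 1)), Real.exp (-x ^ 2 / 2)))
    = ∫ x in Ioi (0:ℝ), Real.exp (-x ^ 2 / 2) * HFPL (mFPL ε x) := by
  let a : ℕ → ℝ := aFPL ε
  let f : ℕ → ℝ → ℝ := fFPL ε
  have ha_nonneg : ∀ n, 0 ≤ a n := fun n => by
    unfold a; unfold aFPL; positivity
  have ha_sq : ∀ n : ℕ, (a n) ^ 2 = ε ^ 2 * ((n:ℝ) + 1) := by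
    intro n
    unfold a; unfold aFPL
    rw [mul_pow, Real.sq_sqrt (by positivity : (0:ℝ) ≤ (n:ℝ) + 1)]
  have hfdef : ∀ n : ℕ, f n = (Ioi (a n)).indicator
      (fun x => 1 / ((n : ℝ) + 1) * Real.exp (-x ^ 2 / 2)) := fun n => rfl
  have hterm : ∀ n : ℕ, ∫ x in Ioi (0:ℝ), f n x
      = 1 / ((n : ℝ) + 1) * ∫ x in Ioi (a n), Real.exp (-x ^ 2 / 2) := by
    intro n
    rw [hfdef n]
    rw [setIntegral_indicator measurableSet_Ioi, Set.Ioi_inter_Ioi,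
      max_eq_right (ha_nonneg n), integral_const_mul]
  have hint : ∀ n : ℕ, Integrable (f n) (volume.restrict (Ioi (0:ℝ))) := by
    intro n
    rw [hfdef n]
    exact (integrable_gauss.const_mul _).indicator measurableSet_Ioi
  -- tail bound
  have hT : ∀ n : ℕ, ∫ x in Ioi (a n), Real.exp (-x ^ 2 / 2)
      ≤ Real.exp (-(a n) ^ 2 / 4) * ∫ x in Ioi (0:ℝ), Real.exp (-x ^ 2 / 4) := by
    intro n
    have h1 : ∫ x in Ioi (a n), Real.exp (-x ^ 2 / 2)
        ≤ ∫ x in Ioi (a n), Real.exp (-(a n) ^ 2 / 4) * Real.exp (-x ^ 2 / 4) := by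
      apply setIntegral_mono_on
      · exact integrable_gauss.mono_set (Ioi_subset_Ioi (ha_nonneg n))
      · exact (integrable_gauss4.mono_set (Ioi_subset_Ioi (ha_nonneg n))).const_mul _
      · exact measurableSet_Ioi
      · intro x hx
        rw [← Real.exp_add]
        apply Real.exp_le_exp.2
        have hax : a n ≤ x := le_of_lt hx
        nlinarith [ha_nonneg n]
    have h2 : ∫ x in Ioi (a n), Real.exp (-(a n) ^ 2 / 4) * Real.exp (-x ^ 2 / 4)
        = Real.exp (-(a n) ^ 2 / 4) * ∫ x in Ioi (a n), Real.exp (-x ^ 2 / 4) :=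
      integral_const_mul _ _
    have h3 : ∫ x in Ioi (a n), Real.exp (-x ^ 2 / 4)
        ≤ ∫ x in Ioi (0:ℝ), Real.exp (-x ^ 2 / 4) := by
      apply setIntegral_mono_set integrable_gauss4
      · filter_upwards with x using Real.exp_nonneg _
      · exact HasSubset.Subset.eventuallyLE (Ioi_subset_Ioi (ha_nonneg n))
    calc ∫ x in Ioi (a n), Real.exp (-x ^ 2 / 2)
        ≤ Real.exp (-(a n) ^ 2 / 4) * ∫ x in Ioi (a n), Real.exp (-x ^ 2 / 4) := by
          rw [← h2]; exact h1
      _ ≤ Real.exp (-(a n) ^ 2 / 4) * ∫ x in Ioi (0:ℝ), Real.exp (-x ^ 2 / 4) := by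
          apply mul_le_mul_of_nonneg_left h3 (Real.exp_nonneg _)
  set C : ℝ := ∫ x in Ioi (0:ℝ), Real.exp (-x ^ 2 / 4) with hC
  have hC0 : 0 ≤ C := setIntegral_nonneg measurableSet_Ioi fun x _ => Real.exp_nonneg _
  have hsum : Summable fun n : ℕ => ∫ x in Ioi (0:ℝ), ‖f n x‖ := by
    have hr1 : Real.exp (-(ε ^ 2) / 4) < 1 := by
      rw [Real.exp_lt_one_iff]
      have : 0 < ε ^ 2 := by positivity
      linarith
    have hr0 : 0 ≤ Real.exp (-(ε ^ 2) / 4) := Real.exp_nonneg _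
    have hgeo : Summable fun n : ℕ => (C * Real.exp (-(ε ^ 2) / 4)) * Real.exp (-(ε ^ 2) / 4) ^ n :=
      (summable_geometric_of_lt_one hr0 hr1).mul_left _
    apply Summable.of_nonneg_of_le _ _ hgeo
    · intro n
      apply setIntegral_nonneg measurableSet_Ioi
      intro x _
      exact norm_nonneg _
    · intro n
      have hfnn : ∀ x : ℝ, ‖f n x‖ = f n x := by
        intro x
        rw [Real.norm_eq_abs, abs_of_nonneg]
        rw [hfdef n]
        apply Set.indicator_nonneg
        intro y _
        positivity
      have h4 : ∫ x in Ioi (0:ℝ), ‖f n x‖ = ∫ x in Ioi (0:ℝ), f n x := by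
        apply setIntegral_congr_fun measurableSet_Ioi
        intro x _
        exact hfnn x
      rw [h4, hterm n]
      have h5 : 1 / ((n : ℝ) + 1) ≤ 1 := by
        rw [div_le_one (by positivity)]
        linarith [Nat.cast_nonneg (α := ℝ) n]
      have h6 : 0 ≤ ∫ x in Ioi (a n), Real.exp (-x ^ 2 / 2) :=
        setIntegral_nonneg measurableSet_Ioi fun x _ => Real.exp_nonneg _
      have h7 : Real.exp (-(a n) ^ 2 / 4) = Real.exp (-(ε ^ 2) / 4) ^ (n + 1) := by
        rw [← Real.exp_nat_mul, ha_sq n]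
        congr 1
        push_cast
        ring
      calc 1 / ((n : ℝ) + 1) * ∫ x in Ioi (a n), Real.exp (-x ^ 2 / 2)
          ≤ ∫ x in Ioi (a n), Real.exp (-x ^ 2 / 2) := by nlinarith
        _ ≤ Real.exp (-(a n) ^ 2 / 4) * C := hT n
        _ = (C * Real.exp (-(ε ^ 2) / 4)) * Real.exp (-(ε ^ 2) / 4) ^ n := by rw [h7]; ring
  have hswap := integral_tsum_of_summable_integral_norm hint hsum
  have hpt : ∀ x ∈ Ioi (0:ℝ), ∑' n, f n x
      = Real.exp (-x ^ 2 / 2) * HFPL (mFPL ε x) := by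
    intro x hx
    have hx0 : (0:ℝ) < x := hx
    have hcond : ∀ n : ℕ, x ∈ Ioi (a n) ↔ n < mFPL ε x := by
      intro n
      rw [mem_Ioi]
      show ε * Real.sqrt ((n : ℝ) + 1) < x ↔ _
      constructor
      · intro h
        have h1 : Real.sqrt ((n:ℝ) + 1) < x / ε := by
          rw [lt_div_iff₀ hε]
          linarith [mul_comm ε (Real.sqrt ((n:ℝ) + 1))]
        have h2 : ((n:ℝ) + 1) < (x / ε) ^ 2 := (Real.sqrt_lt' (by positivity)).1 h1
        have h3 : (n + 1 : ℕ) < ⌈(x / ε) ^ 2⌉₊ := by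
          rw [Nat.lt_ceil]
          push_cast
          exact h2
        unfold mFPL
        omega
      · intro h
        unfold mFPL at h
        have h3 : (n + 1 : ℕ) < ⌈(x / ε) ^ 2⌉₊ := by omega
        rw [Nat.lt_ceil] at h3
        push_cast at h3
        have h1 : Real.sqrt ((n:ℝ) + 1) < x / ε := (Real.sqrt_lt' (by positivity)).2 h3
        rw [lt_div_iff₀ hε] at h1
        linarith [mul_comm ε (Real.sqrt ((n:ℝ) + 1))]
    have hzero : ∀ n ∉ Finset.range (mFPL ε x), f n x = 0 := by
      intro n hn
      rw [Finset.mem_range] at hn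
      rw [hfdef n]
      apply Set.indicator_of_notMem
      rw [hcond n]
      exact hn
    rw [tsum_eq_sum hzero]
    have hmem : ∀ n ∈ Finset.range (mFPL ε x),
        f n x = 1 / ((n : ℝ) + 1) * Real.exp (-x ^ 2 / 2) := by
      intro n hn
      rw [Finset.mem_range] at hn
      rw [hfdef n]
      apply Set.indicator_of_mem
      rw [hcond n]
      exact hn
    rw [Finset.sum_congr rfl hmem, ← Finset.sum_mul, HFPL_eq]
    ring
  calc (∑' n : ℕ, (1 / ((n : ℝ) + 1) *
        ∫ x in Ioi (ε * Real.sqrt ((n : ℝ) + 1)), Real.exp (-x ^ 2 / 2)))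
      = ∑' n : ℕ, ∫ x in Ioi (0:ℝ), f n x := by
        apply tsum_congr
        intro n
        rw [hterm n]
        rfl
    _ = ∫ x in Ioi (0:ℝ), ∑' n, f n x := hswap
    _ = ∫ x in Ioi (0:ℝ), Real.exp (-x ^ 2 / 2) * HFPL (mFPL ε x) :=
        setIntegral_congr_fun measurableSet_Ioi hpt

lemma integrable_gauss_HmFPL {ε : ℝ} (hε : 0 < ε) :
    IntegrableOn (fun x : ℝ => Real.exp (-x ^ 2 / 2) * HFPL (mFPL ε x)) (Ioi 0) := by
  have hbd : IntegrableOn (fun x : ℝ =>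
      Real.exp (-x ^ 2 / 2) * (1 + 2 * (x + 2 * x ^ (-(1/2) : ℝ)))
      + 2 * |Real.log ε| * Real.exp (-x ^ 2 / 2)) (Ioi 0) :=
    integrable_bound.add (integrable_gauss.const_mul _)
  apply Integrable.mono' hbd
  · exact ((((measurable_id.pow_const 2).neg.div_const 2).exp).mul
      (measurable_HmFPL ε)).aestronglyMeasurable
  · rw [ae_restrict_iff' measurableSet_Ioi]
    filter_upwards with x hx
    have hx0 : (0:ℝ) < x := hx
    have he : 0 < Real.exp (-x ^ 2 / 2) := Real.exp_pos _
    have hrp : 0 < x ^ (-(1/2) : ℝ) := Real.rpow_pos_of_pos hx0 _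
    rw [Real.norm_eq_abs, abs_mul, abs_of_pos he, abs_of_nonneg (HFPL_nonneg _)]
    have hlog := abs_log_le hx0
    have h2 : HFPL (mFPL ε x) ≤ 1 + 2 * (x + 2 * x ^ (-(1/2) : ℝ)) + 2 * |Real.log ε| := by
      rcases le_or_gt x ε with h | h
      · rw [mFPL_eq_zero h hx0, HFPL_zero]
        positivity
      · obtain ⟨hlo, hhi⟩ := HmFPL_bounds hε h
        have h3 := le_abs_self (Real.log x)
        have h4 := neg_abs_le (Real.log ε)
        linarith
    calc Real.exp (-x ^ 2 / 2) * HFPL (mFPL ε x)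
        ≤ Real.exp (-x ^ 2 / 2) * (1 + 2 * (x + 2 * x ^ (-(1/2) : ℝ)) + 2 * |Real.log ε|) :=
          mul_le_mul_of_nonneg_left h2 he.le
      _ = Real.exp (-x ^ 2 / 2) * (1 + 2 * (x + 2 * x ^ (-(1/2) : ℝ)))
          + 2 * |Real.log ε| * Real.exp (-x ^ 2 / 2) := by ring

lemma tendsto_mFPL_atTop {x : ℝ} (hx : 0 < x) :
    Tendsto (fun ε : ℝ => mFPL ε x) (nhdsWithin 0 (Ioi 0)) atTop := by
  have h2 : Tendsto (fun ε : ℝ => x / ε) (nhdsWithin 0 (Ioi 0)) atTop := by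
    have := Tendsto.const_mul_atTop hx tendsto_inv_nhdsGT_zero
    simpa [div_eq_mul_inv] using this
  have h1 : Tendsto (fun ε : ℝ => (x / ε) ^ 2) (nhdsWithin 0 (Ioi 0)) atTop :=
    (tendsto_pow_atTop (two_ne_zero)).comp h2
  have h3 : Tendsto (fun ε : ℝ => ⌈(x / ε) ^ 2⌉₊) (nhdsWithin 0 (Ioi 0)) atTop :=
    tendsto_nat_ceil_atTop.comp h1
  exact (tendsto_sub_atTop_nat 1).comp h3

lemma tendsto_pointwise {x : ℝ} (hx : 0 < x) :
    Tendsto (fun ε : ℝ => HFPL (mFPL ε x) + 2 * Real.log ε) (nhdsWithin 0 (Ioi 0))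
      (𝓝 (Real.eulerMascheroniConstant + 2 * Real.log x)) := by
  have hm := tendsto_mFPL_atTop hx
  have hA : Tendsto (fun ε : ℝ => HFPL (mFPL ε x) - Real.log (mFPL ε x))
      (nhdsWithin 0 (Ioi 0)) (𝓝 Real.eulerMascheroniConstant) :=
    tendsto_HFPL_sub_log.comp hm
  have hB : Tendsto (fun ε : ℝ => Real.log (mFPL ε x) - Real.log ((x / ε) ^ 2))
      (nhdsWithin 0 (Ioi 0)) (𝓝 0) := by
    have hub : ∀ᶠ ε : ℝ in nhdsWithin 0 (Ioi 0),
        Real.log (mFPL ε x) - Real.log ((x / ε) ^ 2) ≤ 0 := by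
      filter_upwards [Ioo_mem_nhdsGT_of_mem (by simp [hx] : (0:ℝ) ∈ Ico 0 x)] with ε hε
      obtain ⟨hε0, hεx⟩ := hε
      obtain ⟨hm1, hle, hge⟩ := mFPL_bounds hε0 hεx
      have hm0 : (0:ℝ) < (mFPL ε x : ℝ) := by exact_mod_cast hm1
      have := Real.log_le_log hm0 hle
      linarith
    have hlb : ∀ᶠ ε : ℝ in nhdsWithin 0 (Ioi 0),
        -(1 / (mFPL ε x : ℝ)) ≤ Real.log (mFPL ε x) - Real.log ((x / ε) ^ 2) := by
      filter_upwards [Ioo_mem_nhdsGT_of_mem (by simp [hx] : (0:ℝ) ∈ Ico 0 x)] with ε hε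
      obtain ⟨hε0, hεx⟩ := hε
      obtain ⟨hm1, hle, hge⟩ := mFPL_bounds hε0 hεx
      have hm0 : (0:ℝ) < (mFPL ε x : ℝ) := by exact_mod_cast hm1
      have hu0 : (0:ℝ) < (x / ε) ^ 2 := by positivity
      have h5 : Real.log ((x / ε) ^ 2) ≤ Real.log ((mFPL ε x : ℝ) + 1) :=
        Real.log_le_log hu0 hge
      have h6 : Real.log ((mFPL ε x : ℝ) + 1)
          = Real.log (mFPL ε x) + Real.log (1 + 1 / (mFPL ε x : ℝ)) := by
        rw [← Real.log_mul hm0.ne' (by positivity)]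
        congr 1
        field_simp
      have h7 : Real.log (1 + 1 / (mFPL ε x : ℝ)) ≤ 1 / (mFPL ε x : ℝ) := by
        have := Real.log_le_sub_one_of_pos (show (0:ℝ) < 1 + 1 / (mFPL ε x : ℝ) by positivity)
        linarith
      linarith
    have hz : Tendsto (fun ε : ℝ => -(1 / (mFPL ε x : ℝ))) (nhdsWithin 0 (Ioi 0)) (𝓝 0) := by
      have := (tendsto_one_div_atTop_nhds_zero_nat : Tendsto (fun n : ℕ => 1 / (n : ℝ)) atTop (𝓝 0)).comp hm
      have h8 := this.neg
      rw [neg_zero] at h8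
      exact h8
    exact tendsto_of_tendsto_of_tendsto_of_le_of_le' hz tendsto_const_nhds hlb hub
  have hC : Tendsto (fun ε : ℝ => (HFPL (mFPL ε x) - Real.log (mFPL ε x))
      + (Real.log (mFPL ε x) - Real.log ((x / ε) ^ 2)) + 2 * Real.log x)
      (nhdsWithin 0 (Ioi 0))
      (𝓝 (Real.eulerMascheroniConstant + 0 + 2 * Real.log x)) :=
    (hA.add hB).add tendsto_const_nhds
  rw [add_zero] at hC
  apply hC.congr'
  filter_upwards [Ioo_mem_nhdsGT_of_mem (by simp [hx] : (0:ℝ) ∈ Ico 0 x)] with ε hε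
  obtain ⟨hε0, hεx⟩ := hε
  rw [log_sq hε0 hx]
  ring

lemma tendsto_main :
    Tendsto (fun ε : ℝ =>
        ∫ x in Ioi (0:ℝ), Real.exp (-x ^ 2 / 2) * (HFPL (mFPL ε x) + 2 * Real.log ε))
      (nhdsWithin 0 (Ioi 0))
      (𝓝 (∫ x in Ioi (0:ℝ),
        Real.exp (-x ^ 2 / 2) * (Real.eulerMascheroniConstant + 2 * Real.log x))) := by
  apply tendsto_integral_filter_of_dominated_convergence
    (bound := fun x => Real.exp (-x ^ 2 / 2) * (1 + 2 * (x + 2 * x ^ (-(1/2) : ℝ))))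
  · filter_upwards [self_mem_nhdsWithin] with ε hε
    exact ((((measurable_id.pow_const 2).neg.div_const 2).exp).mul
      ((measurable_HmFPL ε).add_const (2 * Real.log ε))).aestronglyMeasurable
  · filter_upwards [Ioo_mem_nhdsGT_of_mem (by norm_num : (0:ℝ) ∈ Ico 0 1)] with ε hε
    obtain ⟨hε0, hε1⟩ := hε
    rw [ae_restrict_iff' measurableSet_Ioi]
    filter_upwards with x hx
    have hx0 : (0:ℝ) < x := hx
    have he : 0 < Real.exp (-x ^ 2 / 2) := Real.exp_pos _
    have hrp : 0 < x ^ (-(1/2) : ℝ) := Real.rpow_pos_of_pos hx0 _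
    have hlog := abs_log_le hx0
    rw [Real.norm_eq_abs, abs_mul, abs_of_pos he]
    have habs : |HFPL (mFPL ε x) + 2 * Real.log ε| ≤ 1 + 2 * |Real.log x| := by
      rcases le_or_gt x ε with h | h
      · rw [mFPL_eq_zero h hx0, HFPL_zero, zero_add]
        have hlx : Real.log x < 0 := Real.log_neg hx0 (lt_of_le_of_lt h hε1)
        have hlε : Real.log ε < 0 := Real.log_neg hε0 hε1
        have hle2 : Real.log x ≤ Real.log ε := Real.log_le_log hx0 h
        rw [abs_of_neg (by linarith : 2 * Real.log ε < 0), abs_of_neg hlx]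
        linarith
      · obtain ⟨hlo, hhi⟩ := HmFPL_bounds hε0 h
        rw [abs_le]
        constructor
        · have := neg_abs_le (Real.log x)
          linarith
        · have := le_abs_self (Real.log x)
          linarith
    calc Real.exp (-x ^ 2 / 2) * |HFPL (mFPL ε x) + 2 * Real.log ε|
        ≤ Real.exp (-x ^ 2 / 2) * (1 + 2 * |Real.log x|) :=
          mul_le_mul_of_nonneg_left habs he.le
      _ ≤ Real.exp (-x ^ 2 / 2) * (1 + 2 * (x + 2 * x ^ (-(1/2) : ℝ))) := by
          apply mul_le_mul_of_nonneg_left _ he.le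
          linarith
  · exact integrable_bound
  · rw [ae_restrict_iff' measurableSet_Ioi]
    filter_upwards with x hx
    have hx0 : (0:ℝ) < x := hx
    exact (tendsto_pointwise hx0).const_mul _

end AuxFPL

/-- `lim_{ε ↓ 0} (F(ε) + ln ε) = −(1/2)·ln 2`, where
`F(ε) = ∑_{n≥1} (1/n)·(1/√(2π))·∫_{ε√n}^∞ e^{-x²/2} dx`. -/
theorem limit_F_plus_log :
    Tendsto (fun ε : ℝ =>
        (∑' n : ℕ, (1 / ((n : ℝ) + 1)) * ((1 / Real.sqrt (2 * π)) *
          ∫ x in Ioi (ε * Real.sqrt ((n : ℝ) + 1)), Real.exp (-x ^ 2 / 2)))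
        + Real.log ε)
      (nhdsWithin 0 (Ioi 0)) (nhds (-(1 / 2) * Real.log 2)) := by
  have h2π : (0:ℝ) < 2 * π := by positivity
  have hs2π : (0:ℝ) < Real.sqrt (2 * π) := Real.sqrt_pos.2 h2π
  set c : ℝ := 1 / Real.sqrt (2 * π) with hc
  have hev : ∀ᶠ ε : ℝ in nhdsWithin 0 (Ioi 0),
      c * ∫ x in Ioi (0:ℝ), Real.exp (-x ^ 2 / 2) * (HFPL (mFPL ε x) + 2 * Real.log ε)
      = (∑' n : ℕ, (1 / ((n : ℝ) + 1)) * (c *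
          ∫ x in Ioi (ε * Real.sqrt ((n : ℝ) + 1)), Real.exp (-x ^ 2 / 2)))
        + Real.log ε := by
    filter_upwards [self_mem_nhdsWithin] with ε hε
    have hε0 : (0:ℝ) < ε := hε
    have h1 : ∀ n : ℕ, (1 / ((n : ℝ) + 1)) * (c *
        ∫ x in Ioi (ε * Real.sqrt ((n : ℝ) + 1)), Real.exp (-x ^ 2 / 2))
        = c * (1 / ((n : ℝ) + 1) *
          ∫ x in Ioi (ε * Real.sqrt ((n : ℝ) + 1)), Real.exp (-x ^ 2 / 2)) := fun n => by ring
    rw [tsum_congr h1, tsum_mul_left, keyRepr hε0]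
    have h3 : EqOn (fun x : ℝ => Real.exp (-x ^ 2 / 2) * (HFPL (mFPL ε x) + 2 * Real.log ε))
        (fun x : ℝ => Real.exp (-x ^ 2 / 2) * HFPL (mFPL ε x)
          + (2 * Real.log ε) * Real.exp (-x ^ 2 / 2)) (Ioi 0) := by
      intro x _; simp only; ring
    rw [setIntegral_congr_fun measurableSet_Ioi h3,
      integral_add (integrable_gauss_HmFPL hε0) (integrable_gauss.const_mul _),
      integral_const_mul, gauss_int, hc]
    field_simp
  apply Tendsto.congr' hev
  have hval : c * ∫ x in Ioi (0:ℝ),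
      Real.exp (-x ^ 2 / 2) * (Real.eulerMascheroniConstant + 2 * Real.log x)
      = -(1 / 2) * Real.log 2 := by
    have h3 : EqOn (fun x : ℝ =>
        Real.exp (-x ^ 2 / 2) * (Real.eulerMascheroniConstant + 2 * Real.log x))
        (fun x : ℝ => Real.eulerMascheroniConstant * Real.exp (-x ^ 2 / 2)
          + 2 * (Real.exp (-x ^ 2 / 2) * Real.log x)) (Ioi 0) := by
      intro x _; simp only; ring
    rw [setIntegral_congr_fun measurableSet_Ioi h3,
      integral_add (integrable_gauss.const_mul _) (integrable_gauss_log.const_mul 2),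
      integral_const_mul, integral_const_mul, gauss_int, log_gauss_int, hc]
    field_simp
    ring
  rw [← hval]
  exact tendsto_main.const_mul c
end

section
/- For r → ∞, the coefficient bound |ζ(1/2 − r)·(β²/2)^r/(√(2π)·r!)| ~ (1/(π·√(2r+1)))·(β²/(4π))^r holds; in particular the series ∑_{r=0}^∞ ζ(1/2 − r)·(−β²/2)^r/r! converges absolutely for |β| < 2√π and diverges for |β| > 2√π. -/
open Real Filter

noncomputable def Zf (σ : ℝ) : ℝ := ∑' n : ℕ, 1 / (n : ℝ) ^ σ

lemma summable_aux {σ : ℝ} (h : 1 < σ) : Summable (fun n : ℕ => 1 / (n : ℝ) ^ σ) := by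
  simpa using Real.summable_one_div_nat_rpow.mpr h

lemma zeta_real {σ : ℝ} (h : 1 < σ) : riemannZeta (σ : ℂ) = ((Zf σ : ℝ) : ℂ) := by
  rw [zeta_eq_tsum_one_div_nat_cpow (by simpa using h), Zf, Complex.ofReal_tsum]
  congr 1
  ext n
  rw [show ((n : ℂ)) = ((n : ℝ) : ℂ) by push_cast; ring, ← Complex.ofReal_cpow n.cast_nonneg]
  push_cast
  ring

lemma summable_tail {σ : ℝ} (h : 1 < σ) : Summable (fun n : ℕ => 1 / ((n : ℝ) + 2) ^ σ) := by
  have := (summable_nat_add_iff 2).mpr (summable_aux h)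
  refine this.congr fun n => ?_
  push_cast; ring_nf

lemma Zf_eq {σ : ℝ} (h : 1 < σ) : Zf σ = 1 + ∑' n : ℕ, 1 / ((n : ℝ) + 2) ^ σ := by
  have hs := summable_aux h
  have := hs.sum_add_tsum_nat_add 2
  rw [Zf, ← this]
  rw [Finset.sum_range_succ, Finset.sum_range_one]
  have h0 : (0 : ℝ) ^ σ = 0 := Real.zero_rpow (by linarith)
  simp [h0]

lemma Zf_ge_one {σ : ℝ} (h : 1 < σ) : 1 ≤ Zf σ := by
  rw [Zf_eq h]
  have : 0 ≤ ∑' n : ℕ, 1 / ((n : ℝ) + 2) ^ σ :=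
    tsum_nonneg fun n => by positivity
  linarith

lemma tendsto_Zf : Tendsto (fun r : ℕ => Zf ((r : ℝ) + 1 / 2)) atTop (nhds 1) := by
  set T0 : ℝ := ∑' n : ℕ, 1 / ((n : ℝ) + 2) ^ ((3 : ℝ) / 2)
  have hT0s : Summable (fun n : ℕ => 1 / ((n : ℝ) + 2) ^ ((3 : ℝ) / 2)) :=
    summable_tail (by norm_num)
  have hub : ∀ r : ℕ, 1 ≤ r → Zf ((r : ℝ) + 1 / 2) ≤ 1 + 2 * T0 * (1 / 2) ^ r := by
    intro r hr
    obtain ⟨m, rfl⟩ := Nat.exists_eq_add_of_le hr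
    have h1 : (1 : ℝ) < ((1 + m : ℕ) : ℝ) + 1 / 2 := by push_cast; linarith
    rw [Zf_eq h1]
    have key : ∀ n : ℕ, 1 / ((n : ℝ) + 2) ^ (((1 + m : ℕ) : ℝ) + 1 / 2)
        ≤ (1 / 2) ^ m * (1 / ((n : ℝ) + 2) ^ ((3 : ℝ) / 2)) := by
      intro n
      have hb : (0 : ℝ) < (n : ℝ) + 2 := by positivity
      have he : (((1 + m : ℕ) : ℝ) + 1 / 2) = (m : ℝ) + 3 / 2 := by push_cast; ring
      rw [he, Real.rpow_add hb, Real.rpow_natCast]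
      rw [one_div, mul_inv_rev, ← one_div, ← one_div]
      have h2 : (2 : ℝ) ^ m ≤ ((n : ℝ) + 2) ^ m :=
        pow_le_pow_left₀ (by norm_num) (by linarith) m
      have : 1 / ((n : ℝ) + 2) ^ m ≤ (1 / 2) ^ m := by
        rw [div_pow, one_pow]
        exact one_div_le_one_div_of_le (by positivity) h2
      have h3 : 0 ≤ 1 / ((n : ℝ) + 2) ^ ((3:ℝ)/2) := by positivity
      calc 1 / ((n : ℝ) + 2) ^ ((3:ℝ)/2) * (1 / ((n:ℝ)+2) ^ m)
          ≤ 1 / ((n : ℝ) + 2) ^ ((3:ℝ)/2) * (1/2) ^ m := by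
            exact mul_le_mul_of_nonneg_left this h3
        _ = (1/2) ^ m * (1 / ((n : ℝ) + 2) ^ ((3:ℝ)/2)) := by ring
    have hsum : (∑' n : ℕ, 1 / ((n : ℝ) + 2) ^ (((1 + m : ℕ) : ℝ) + 1 / 2))
        ≤ ∑' n : ℕ, (1 / 2) ^ m * (1 / ((n : ℝ) + 2) ^ ((3 : ℝ) / 2)) := by
      refine (summable_tail h1).tsum_le_tsum key (hT0s.mul_left _)
    rw [tsum_mul_left] at hsum
    have hps : ((1:ℝ)/2) ^ (1 + m) = (1/2) * (1/2) ^ m := by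
      rw [pow_add, pow_one]
    calc (1:ℝ) + ∑' n : ℕ, 1 / ((n : ℝ) + 2) ^ (((1 + m : ℕ) : ℝ) + 1 / 2)
        ≤ 1 + (1/2) ^ m * T0 := by linarith
      _ = 1 + 2 * T0 * (1/2) ^ (1 + m) := by rw [hps]; ring
  have hlb : ∀ r : ℕ, 1 ≤ r → (1 : ℝ) ≤ Zf ((r : ℝ) + 1 / 2) := by
    intro r hr
    have h1 : (1:ℝ) ≤ r := by exact_mod_cast hr
    exact Zf_ge_one (by linarith)
  have htop : Tendsto (fun r : ℕ => 1 + 2 * T0 * (1 / 2) ^ r) atTop (nhds 1) := by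
    have := tendsto_pow_atTop_nhds_zero_of_lt_one (by norm_num : (0:ℝ) ≤ 1/2) (by norm_num : (1:ℝ)/2 < 1)
    have := (this.const_mul (2 * T0)).const_add 1
    simpa using this
  refine tendsto_of_tendsto_of_tendsto_of_le_of_le' tendsto_const_nhds htop ?_ ?_
  · exact (eventually_ge_atTop 1).mono hlb
  · exact (eventually_ge_atTop 1).mono hub

lemma gamma_half (r : ℕ) :
    Real.Gamma ((r : ℝ) + 1 / 2) = (2 * r).factorial * Real.sqrt π / (4 ^ r * r.factorial) := by
  induction r with
  | zero =>
    rw [show ((0:ℕ):ℝ) + 1/2 = 1/2 by norm_num, Real.Gamma_one_half_eq]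
    simp
  | succ n ih =>
    have h : ((n + 1 : ℕ) : ℝ) + 1 / 2 = ((n : ℝ) + 1 / 2) + 1 := by push_cast; ring
    rw [h, Real.Gamma_add_one (by positivity), ih]
    have h2 : (2 * (n + 1)) = (2 * n + 1) + 1 := by ring
    rw [h2, Nat.factorial_succ, Nat.factorial_succ, Nat.factorial_succ]
    have h4 : (4 : ℝ) ^ (n + 1) = 4 * 4 ^ n := by ring
    push_cast
    field_simp
    ring

lemma zre (r : ℕ) (hr : 1 ≤ r) :
    |(riemannZeta (1 / 2 - (r : ℂ))).re| =
      Real.sqrt 2 * ((2 * r).factorial * Real.sqrt π * Zf ((r : ℝ) + 1 / 2)) /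
        (4 ^ r * r.factorial * ((2 * π) ^ r * Real.sqrt (2 * π))) := by
  set σ : ℝ := (r : ℝ) + 1 / 2 with hσdef
  have hr1 : (1 : ℝ) ≤ (r : ℝ) := by exact_mod_cast hr
  have hσ : 1 < σ := by rw [hσdef]; linarith
  have hs : ∀ n : ℕ, (σ : ℂ) ≠ -n := by
    intro n h
    have := congrArg Complex.re h
    simp at this
    have hn : (0:ℝ) ≤ (n:ℝ) := n.cast_nonneg
    rw [hσdef] at this; linarith
  have hs' : (σ : ℂ) ≠ 1 := by
    intro h
    have := congrArg Complex.re h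
    simp at this
    rw [hσdef] at this; linarith
  have hfe := riemannZeta_one_sub hs hs'
  have h1s : (1 : ℂ) - σ = 1 / 2 - (r : ℂ) := by
    rw [hσdef]; push_cast; ring
  rw [h1s] at hfe
  -- convert RHS into real
  have hc1 : (2 : ℂ) * π = ((2 * π : ℝ) : ℂ) := by push_cast; ring
  have hc2 : -(σ : ℂ) = ((-σ : ℝ) : ℂ) := by push_cast; ring
  have hcpow : ((2 : ℂ) * π) ^ (-(σ : ℂ)) = (((2 * π) ^ (-σ) : ℝ) : ℂ) := by
    rw [hc1, hc2, Complex.ofReal_cpow (by positivity)]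
  have hgamma : Complex.Gamma (σ : ℂ) = ((Real.Gamma σ : ℝ) : ℂ) := Complex.Gamma_ofReal σ
  have hcos : Complex.cos ((π : ℂ) * σ / 2) = ((Real.cos (π * σ / 2) : ℝ) : ℂ) := by
    rw [show (π : ℂ) * σ / 2 = ((π * σ / 2 : ℝ) : ℂ) by push_cast; ring, Complex.ofReal_cos]
  rw [hcpow, hgamma, hcos, zeta_real hσ] at hfe
  have hfe' : riemannZeta (1 / 2 - (r : ℂ)) =
      ((2 * ((2 * π) ^ (-σ)) * Real.Gamma σ * Real.cos (π * σ / 2) * Zf σ : ℝ) : ℂ) := by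
    rw [hfe]; push_cast; ring
  rw [hfe', Complex.ofReal_re]
  -- now a real computation
  have hcos2 : |Real.cos (π * σ / 2)| = Real.sqrt 2 / 2 := by
    have hd : 2 * (π * σ / 2) = (r : ℝ) * π + π / 2 := by rw [hσdef]; ring
    have hsq : Real.cos (π * σ / 2) ^ 2 = 1 / 2 := by
      rw [Real.cos_sq, hd, Real.cos_add_pi_div_two, Real.sin_nat_mul_pi]
      norm_num
    rw [← Real.sqrt_sq_eq_abs, hsq]
    rw [show (1:ℝ)/2 = 2 / 4 by norm_num, Real.sqrt_div (by norm_num),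
      show (4:ℝ) = 2 ^ 2 by norm_num, Real.sqrt_sq (by norm_num)]
  have hpow : (2 * π) ^ (-σ) = 1 / ((2 * π) ^ r * Real.sqrt (2 * π)) := by
    rw [Real.rpow_neg (by positivity), hσdef, Real.rpow_add (by positivity),
      Real.rpow_natCast, ← Real.sqrt_eq_rpow]
    rw [one_div]
  have hZ : 0 ≤ Zf σ := le_trans zero_le_one (Zf_ge_one hσ)
  have hG : 0 ≤ Real.Gamma σ := le_of_lt (Real.Gamma_pos_of_pos (by positivity))
  rw [abs_mul, abs_mul, abs_mul, abs_mul, hcos2, abs_of_nonneg hZ, abs_of_nonneg hG,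
    abs_of_nonneg (le_of_lt (by positivity : (0:ℝ) < (2*π) ^ (-σ))), abs_of_nonneg (by norm_num : (0:ℝ) ≤ 2)]
  rw [hpow, hσdef, gamma_half r]
  have h4 : (0:ℝ) < 4 ^ r := by positivity
  have hf : (0:ℝ) < (r.factorial : ℝ) := by exact_mod_cast r.factorial_pos
  have hsp : (0:ℝ) < Real.sqrt (2*π) := Real.sqrt_pos.mpr (by positivity)
  have hpp : (0:ℝ) < (2*π) ^ r := by positivity
  field_simp

lemma stirling_ratio (r : ℕ) (hr : 1 ≤ r) :
    Stirling.stirlingSeq (2 * r) / Stirling.stirlingSeq r ^ 2 =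
      (2 * r).factorial * Real.sqrt r / (4 ^ r * (r.factorial : ℝ) ^ 2) := by
  have hr1 : (1 : ℝ) ≤ (r : ℝ) := by exact_mod_cast hr
  have hrpos : (0 : ℝ) < (r : ℝ) := by linarith
  rw [Stirling.stirlingSeq, Stirling.stirlingSeq]
  have hc : ((2 * r : ℕ) : ℝ) = 2 * (r : ℝ) := by push_cast; ring
  rw [hc]
  have e4 : ((2 * (r:ℝ)) / Real.exp 1) ^ (2 * r) = 4 ^ r * (((r:ℝ) / Real.exp 1) ^ r) ^ 2 := by
    rw [show (2 * (r:ℝ)) / Real.exp 1 = 2 * ((r:ℝ) / Real.exp 1) by ring, mul_pow,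
      show (4:ℝ) = 2 ^ 2 by norm_num, ← pow_mul, show 2 * r = r * 2 by ring, pow_mul]
    ring
  have e1 : Real.sqrt (2 * (2 * (r:ℝ))) = 2 * Real.sqrt r := by
    rw [show 2 * (2 * (r:ℝ)) = 4 * r by ring, Real.sqrt_mul (by norm_num) (r:ℝ),
      show (4:ℝ) = 2 ^ 2 by norm_num, Real.sqrt_sq (by norm_num)]
  have e2 : Real.sqrt (2 * (r:ℝ)) ^ 2 = 2 * r := Real.sq_sqrt (by positivity)
  have e3 : Real.sqrt (r:ℝ) * Real.sqrt (r:ℝ) = (r:ℝ) := Real.mul_self_sqrt (by positivity)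
  rw [e4, e1]
  have hsr : Real.sqrt (r:ℝ) ≠ 0 := by positivity
  have hs2r : Real.sqrt (2*(r:ℝ)) ≠ 0 := by positivity
  have hpe : ((r:ℝ) / Real.exp 1) ^ r ≠ 0 := by positivity
  have hfr : ((r).factorial : ℝ) ≠ 0 := by exact_mod_cast (r).factorial_ne_zero
  field_simp
  rw [e2, Real.sq_sqrt hrpos.le]

set_option maxHeartbeats 1000000 in
/-- For `β ≠ 0`, the coefficient asymptotics
`|ζ(1/2 − r)·(β²/2)^r/(√(2π)·r!)| ~ (1/(π√(2r+1)))·(β²/(4π))^r` as `r → ∞`;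
consequently the series `∑ ζ(1/2 − r)(−β²/2)^r/r!` converges absolutely for
`|β| < 2√π` and diverges for `|β| > 2√π`. -/
theorem zeta_coefficient_asymptotics (β : ℝ) (hβ : β ≠ 0) :
    Tendsto (fun r : ℕ =>
        (|(riemannZeta (1 / 2 - (r : ℂ))).re| * (β ^ 2 / 2) ^ r / (Real.sqrt (2 * π) * r.factorial))
          / ((1 / (π * Real.sqrt (2 * (r : ℝ) + 1))) * (β ^ 2 / (4 * π)) ^ r))
      atTop (nhds 1) ∧
    (|β| < 2 * Real.sqrt π →
      Summable (fun r : ℕ =>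
        |(riemannZeta (1 / 2 - (r : ℂ))).re * (-β ^ 2 / 2) ^ r / r.factorial|)) ∧
    (2 * Real.sqrt π < |β| →
      ¬ Summable (fun r : ℕ =>
        (riemannZeta (1 / 2 - (r : ℂ))).re * (-β ^ 2 / 2) ^ r / r.factorial)) := by
  have hπ : (0:ℝ) < π := Real.pi_pos
  have hβ2 : (0:ℝ) < β ^ 2 := by positivity
  set q : ℝ := β ^ 2 / (4 * π) with hq
  have hq0 : 0 < q := by positivity
  set num : ℕ → ℝ := fun r =>
    |(riemannZeta (1 / 2 - (r : ℂ))).re| * (β ^ 2 / 2) ^ r / (Real.sqrt (2 * π) * r.factorial)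
    with hnum
  set c : ℕ → ℝ := fun r => (1 / (π * Real.sqrt (2 * (r : ℝ) + 1))) * q ^ r with hc
  have hcpos : ∀ r : ℕ, 0 < c r := by
    intro r
    have h1 : (0:ℝ) < 2 * (r:ℝ) + 1 := by positivity
    have : (0:ℝ) < Real.sqrt (2 * (r:ℝ) + 1) := Real.sqrt_pos.mpr h1
    rw [hc]; positivity
  have h2pi : Real.sqrt 2 * Real.sqrt π = Real.sqrt (2 * π) :=
    (Real.sqrt_mul (by norm_num) π).symm
  have hself : Real.sqrt (2 * π) * Real.sqrt (2 * π) = 2 * π :=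
    Real.mul_self_sqrt (by positivity)
  have hsppos : (0:ℝ) < Real.sqrt (2 * π) := Real.sqrt_pos.mpr (by positivity)
  -- the limit of the comparison function
  have hG : Tendsto (fun r : ℕ => Real.sqrt (2 * π) / 2 * Zf ((r:ℝ) + 1/2) *
      (Real.sqrt (2 * (r:ℝ) + 1) / Real.sqrt r) *
      (Stirling.stirlingSeq (2 * r) / Stirling.stirlingSeq r ^ 2)) atTop (nhds 1) := by
    have tZ := tendsto_Zf
    have tsq : Tendsto (fun r : ℕ => Real.sqrt (2 * (r:ℝ) + 1) / Real.sqrt r) atTop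
        (nhds (Real.sqrt 2)) := by
      have h1 : Tendsto (fun r : ℕ => 2 + 1 / (r:ℝ)) atTop (nhds 2) := by
        simpa using (tendsto_const_nhds (x := (2:ℝ))).add (tendsto_one_div_atTop_nhds_zero_nat (𝕜 := ℝ))
      have h2 : Tendsto (fun r : ℕ => Real.sqrt (2 + 1 / (r:ℝ))) atTop (nhds (Real.sqrt 2)) :=
        (Real.continuous_sqrt.tendsto 2).comp h1
      refine h2.congr' ?_
      filter_upwards [eventually_ge_atTop 1] with r hr
      have hr1 : (1:ℝ) ≤ (r:ℝ) := by exact_mod_cast hr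
      have hrpos : (0:ℝ) < (r:ℝ) := by linarith
      rw [show 2 + 1 / (r:ℝ) = (2 * (r:ℝ) + 1) / r by field_simp,
        Real.sqrt_div (by positivity) (r:ℝ)]
    have tS2 : Tendsto (fun r : ℕ => Stirling.stirlingSeq (2 * r)) atTop
        (nhds (Real.sqrt π)) :=
      Stirling.tendsto_stirlingSeq_sqrt_pi.comp
        (tendsto_atTop_mono (fun n => Nat.le_mul_of_pos_left n (by norm_num)) tendsto_id)
    have tSdiv : Tendsto (fun r : ℕ => Stirling.stirlingSeq (2 * r) / Stirling.stirlingSeq r ^ 2)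
        atTop (nhds (Real.sqrt π / π)) := by
      have := tS2.div (Stirling.tendsto_stirlingSeq_sqrt_pi.pow 2) ?_
      · rw [Real.sq_sqrt hπ.le] at this; exact this
      · rw [Real.sq_sqrt hπ.le]; exact hπ.ne'
    have := (((tendsto_const_nhds (x := Real.sqrt (2 * π) / 2)).mul tZ).mul tsq).mul tSdiv
    have s2 : Real.sqrt 2 * Real.sqrt 2 = 2 := Real.mul_self_sqrt (by norm_num)
    have sp : Real.sqrt π * Real.sqrt π = π := Real.mul_self_sqrt hπ.le
    have hL : Real.sqrt (2 * π) / 2 * 1 * Real.sqrt 2 * (Real.sqrt π / π) = 1 := by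
      calc Real.sqrt (2 * π) / 2 * 1 * Real.sqrt 2 * (Real.sqrt π / π)
          = (Real.sqrt 2 * Real.sqrt 2) * (Real.sqrt π * Real.sqrt π) / (2 * π) := by
            rw [← h2pi]; ring
        _ = 1 := by rw [s2, sp]; field_simp
    rw [hL] at this
    exact this
  have hpowq : ∀ r : ℕ, q ^ r * (2 * π) ^ r = (β ^ 2 / 2) ^ r := by
    intro r
    rw [hq, ← mul_pow]
    congr 1
    field_simp; ring
  have hEq : ∀ᶠ r : ℕ in atTop, num r / c r =
      Real.sqrt (2 * π) / 2 * Zf ((r:ℝ) + 1/2) *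
      (Real.sqrt (2 * (r:ℝ) + 1) / Real.sqrt r) *
      (Stirling.stirlingSeq (2 * r) / Stirling.stirlingSeq r ^ 2) := by
    filter_upwards [eventually_ge_atTop 1] with r hr
    have hr1 : (1:ℝ) ≤ (r:ℝ) := by exact_mod_cast hr
    have hrpos : (0:ℝ) < (r:ℝ) := by linarith
    rw [hnum, hc]
    simp only
    rw [zre r hr, stirling_ratio r hr, ← hpowq r]
    have hsr : (0:ℝ) < Real.sqrt r := Real.sqrt_pos.mpr hrpos
    have hs1 : (0:ℝ) < Real.sqrt (2 * (r:ℝ) + 1) := Real.sqrt_pos.mpr (by positivity)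
    have hfr : (0:ℝ) < (r.factorial : ℝ) := by exact_mod_cast r.factorial_pos
    have hf2r : (0:ℝ) < ((2*r).factorial : ℝ) := by exact_mod_cast (2*r).factorial_pos
    have hqr : (0:ℝ) < q ^ r := by positivity
    have h2pr : (0:ℝ) < (2 * π) ^ r := by positivity
    have h4r : (0:ℝ) < (4:ℝ) ^ r := by positivity
    generalize hA : q ^ r = A at hqr ⊢
    generalize hB : (2 * π) ^ r = B at h2pr ⊢
    generalize hD : (4:ℝ) ^ r = D at h4r ⊢
    have e5 : Real.sqrt 2 ^ 3 = 2 * Real.sqrt 2 := by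
      rw [pow_succ, Real.sq_sqrt (by norm_num : (0:ℝ) ≤ 2), mul_comm]
    have e6 : Real.sqrt π ^ 3 = π * Real.sqrt π := by
      rw [pow_succ, Real.sq_sqrt hπ.le, mul_comm]
    field_simp
    ring_nf
    rw [show Real.sqrt (π * 2) = Real.sqrt 2 * Real.sqrt π by rw [mul_comm π 2, h2pi], mul_pow, e5, e6]
    ring
  have hmain : Tendsto (fun r : ℕ => num r / c r) atTop (nhds 1) :=
    hG.congr' (Filter.EventuallyEq.symm hEq)
  have habs : ∀ r : ℕ,
      |(riemannZeta (1 / 2 - (r : ℂ))).re * (-β ^ 2 / 2) ^ r / r.factorial|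
        = Real.sqrt (2 * π) * num r := by
    intro r
    have hfr : (0:ℝ) < (r.factorial : ℝ) := by exact_mod_cast r.factorial_pos
    rw [hnum]
    simp only
    rw [abs_div, abs_mul, abs_pow]
    rw [show |(-β ^ 2 / 2 : ℝ)| = β ^ 2 / 2 by
      rw [abs_div, abs_neg, abs_of_nonneg hβ2.le, abs_of_nonneg (by norm_num : (0:ℝ) ≤ 2)],
      abs_of_nonneg hfr.le]
    field_simp
  refine ⟨hmain, ?_, ?_⟩
  · -- summable case
    intro hβlt
    have hqlt : q < 1 := by
      have h1 : |β| ^ 2 < (2 * Real.sqrt π) ^ 2 :=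
        pow_lt_pow_left₀ hβlt (abs_nonneg β) (by norm_num)
      have h2 : (2 * Real.sqrt π) ^ 2 = 4 * π := by
        rw [mul_pow, Real.sq_sqrt hπ.le]; norm_num
      rw [sq_abs, h2] at h1
      rw [hq]
      exact (div_lt_one (by positivity)).mpr h1
    have hev : ∀ᶠ r : ℕ in atTop, num r ≤ 2 * c r := by
      filter_upwards [hmain.eventually (eventually_le_nhds (by norm_num : (1:ℝ) < 2))] with r h
      have hcr := hcpos r
      have := (div_le_iff₀ hcr).mp h
      linarith
    obtain ⟨N, hN⟩ := eventually_atTop.mp hev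
    rw [← summable_nat_add_iff N]
    have hgeo : Summable (fun n : ℕ => (2 * Real.sqrt (2 * π) / π * q ^ N) * q ^ n) :=
      (summable_geometric_of_lt_one hq0.le hqlt).mul_left _
    refine Summable.of_nonneg_of_le (fun n => abs_nonneg _) (fun n => ?_) hgeo
    rw [habs (n + N)]
    have hNle := hN (n + N) (by omega)
    have hX : (1:ℝ) ≤ Real.sqrt (2 * ((n + N : ℕ):ℝ) + 1) := by
      have h1 : Real.sqrt 1 ≤ Real.sqrt (2 * ((n + N : ℕ):ℝ) + 1) := by
        apply Real.sqrt_le_sqrt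
        have : (0:ℝ) ≤ ((n + N : ℕ):ℝ) := Nat.cast_nonneg _
        linarith
      rwa [Real.sqrt_one] at h1
    have hc_le : c (n + N) ≤ (1 / π) * q ^ (n + N) := by
      rw [hc]
      simp only
      have : 1 / (π * Real.sqrt (2 * ((n + N : ℕ):ℝ) + 1)) ≤ 1 / π := by
        apply one_div_le_one_div_of_le hπ
        nlinarith
      exact mul_le_mul_of_nonneg_right this (by positivity)
    calc Real.sqrt (2 * π) * num (n + N) ≤ Real.sqrt (2 * π) * (2 * c (n + N)) := by
          exact mul_le_mul_of_nonneg_left hNle hsppos.le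
      _ ≤ Real.sqrt (2 * π) * (2 * ((1 / π) * q ^ (n + N))) := by
          have := hcpos (n + N)
          nlinarith
      _ = (2 * Real.sqrt (2 * π) / π * q ^ N) * q ^ n := by
          rw [pow_add]; field_simp
  · -- divergent case
    intro hβgt hsum
    have hq1 : 1 < q := by
      have h1 : (2 * Real.sqrt π) ^ 2 < |β| ^ 2 :=
        pow_lt_pow_left₀ hβgt (by positivity) (by norm_num)
      have h2 : (2 * Real.sqrt π) ^ 2 = 4 * π := by
        rw [mul_pow, Real.sq_sqrt hπ.le]; norm_num
      rw [sq_abs, h2] at h1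
      rw [hq]
      exact (one_lt_div (by positivity)).mpr h1
    have htend0 := hsum.tendsto_atTop_zero
    have habs0 : Tendsto (fun r : ℕ =>
        |(riemannZeta (1 / 2 - (r : ℂ))).re * (-β ^ 2 / 2) ^ r / r.factorial|) atTop (nhds 0) := by
      simpa using htend0.abs
    have hnum0 : Tendsto num atTop (nhds 0) := by
      have := habs0.div_const (Real.sqrt (2 * π))
      rw [zero_div] at this
      refine this.congr fun r => ?_
      rw [habs r]
      field_simp
    have hlow : ∀ᶠ r : ℕ in atTop, (q - 1) / (6 * π) ≤ num r := by
      filter_upwards [hmain.eventually (eventually_ge_nhds (by norm_num : (1:ℝ)/2 < 1)),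
        eventually_ge_atTop 1] with r h hr
      have hr1 : (1:ℝ) ≤ (r:ℝ) := by exact_mod_cast hr
      have hcr := hcpos r
      have hnc : 1/2 * c r ≤ num r := (le_div_iff₀ hcr).mp h
      have hql : (r:ℝ) * (q - 1) ≤ q ^ r := by
        have := one_add_mul_le_pow (by linarith : (-2:ℝ) ≤ q - 1) r
        rw [show (1:ℝ) + (q - 1) = q by ring] at this
        nlinarith
      have hsq3 : Real.sqrt (2 * (r:ℝ) + 1) ≤ 3 * r := by
        rw [Real.sqrt_le_left (by positivity)]
        nlinarith
      have hclow : (q - 1) / (3 * π) ≤ c r := by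
        rw [hc]
        simp only
        have hd1 : (0:ℝ) < π * Real.sqrt (2 * (r:ℝ) + 1) := by
          have := Real.sqrt_pos.mpr (by positivity : (0:ℝ) < 2 * (r:ℝ) + 1)
          positivity
        have step1 : 1 / (π * (3 * (r:ℝ))) ≤ 1 / (π * Real.sqrt (2 * (r:ℝ) + 1)) := by
          apply one_div_le_one_div_of_le hd1
          nlinarith
        calc (q - 1) / (3 * π) = 1 / (π * (3 * (r:ℝ))) * ((r:ℝ) * (q - 1)) := by
              field_simp
          _ ≤ 1 / (π * Real.sqrt (2 * (r:ℝ) + 1)) * q ^ r := by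
              apply mul_le_mul step1 hql (by nlinarith) (by positivity)
      calc (q - 1) / (6 * π) = 1/2 * ((q - 1) / (3 * π)) := by ring
        _ ≤ 1/2 * c r := by linarith
        _ ≤ num r := hnc
    have hcontra := ge_of_tendsto hnum0 hlow
    have : (0:ℝ) < (q - 1) / (6 * π) := by
      apply div_pos (by linarith) (by linarith)
    linarith
end
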